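/- arXiv:1105.2061 — 6 statements merged into one kernel-verified Lean document; each statement's English description precedes it below -/
import Mathlib

section
/- Assume: (i) there is a constant C₁ > 0 such that for every q ∈ Q, sup over v ∈ X₂ \ {0} of b(v, q)/‖v‖_{X₂} ≥ C₁ ‖q‖_Q; (ii) letting K := {v ∈ X₂ : b(v, q) = 0 for all q ∈ Q}, there is a constant C₂ > 0 such that for every v ∈ K, sup over ξ ∈ X₁ \ {0} of b₁(ξ, v)/‖ξ‖_{X₁} ≥ C₂ ‖v‖_{X₂}; (iii) there is a constant C₃ > 0 such that a(ξ, ξ) ≥ C₃ ‖ξ‖²_{X₁} for all ξ ∈ X₁. Then for every continuous linear functional F on Q the dual-dual (expanded) mixed problem has a unique solution (θ, u, p) ∈ X₁ × X₂ × Q, and there exists a constant C > 0, depending only on C₁, C₂, C₃ and the norms of the bilinear forms a, b₁, b, such that ‖θ‖_{X₁} + ‖u‖_{X₂} + ‖p‖_Q ≤ C ‖F‖_{Q'}. -/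
open InnerProductSpace RealInnerProductSpace ContinuousLinearMap

section Aux

variable {E F : Type*} [NormedAddCommGroup E] [InnerProductSpace ℝ E]
  [NormedAddCommGroup F] [InnerProductSpace ℝ F] [CompleteSpace F]

/-- The operator associated to a bounded bilinear form via the Riesz representation. -/
noncomputable def rieszOp (c : E →L[ℝ] F →L[ℝ] ℝ) : E →L[ℝ] F :=
  LinearMap.mkContinuous
    { toFun := fun e => (InnerProductSpace.toDual ℝ F).symm (c e)
      map_add' := fun x y => by simp
      map_smul' := fun r x => by simp }
    ‖c‖ (fun e => by
      simp only [LinearMap.coe_mk, AddHom.coe_mk]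
      rw [LinearIsometryEquiv.norm_map]
      exact c.le_opNorm e)

lemma rieszOp_inner (c : E →L[ℝ] F →L[ℝ] ℝ) (e : E) (f : F) :
    ⟪rieszOp c e, f⟫_ℝ = c e f := by
  simp [rieszOp, InnerProductSpace.toDual_symm_apply]

lemma eq_zero_of_inner_right (x : E) (h : ∀ y : E, ⟪x, y⟫_ℝ = 0) : x = 0 := by
  have := h x; rwa [inner_self_eq_zero] at this

variable {V : Type*} [NormedAddCommGroup V] [InnerProductSpace ℝ V]

/-- The bilinear form associated to an operator. -/
noncomputable def bilinOf (S : V →L[ℝ] V) : V →L[ℝ] V →L[ℝ] ℝ :=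
  LinearMap.mkContinuous₂
    (LinearMap.mk₂ ℝ (fun v w => ⟪S v, w⟫_ℝ)
      (fun x y z => by simp [inner_add_left])
      (fun r x y => by simp [real_inner_smul_left])
      (fun x y z => by simp [inner_add_right])
      (fun r x y => by simp [real_inner_smul_right]))
    ‖S‖ (fun v w => by
      simp only [LinearMap.mk₂_apply]
      calc ‖⟪S v, w⟫_ℝ‖ ≤ ‖S v‖ * ‖w‖ := norm_inner_le_norm _ _
        _ ≤ ‖S‖ * ‖v‖ * ‖w‖ :=
            mul_le_mul_of_nonneg_right (S.le_opNorm v) (norm_nonneg w))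

@[simp] lemma bilinOf_apply (S : V →L[ℝ] V) (v w : V) : bilinOf S v w = ⟪S v, w⟫_ℝ := rfl

/-- A coercive operator is bounded below. -/
lemma lower_of_coercive {S : V →L[ℝ] V} {c : ℝ}
    (h : ∀ v, c * ‖v‖ ^ 2 ≤ ⟪S v, v⟫_ℝ) (v : V) : c * ‖v‖ ≤ ‖S v‖ := by
  rcases eq_or_ne v 0 with rfl | hv
  · simp
  · have hv' : 0 < ‖v‖ := norm_pos_iff.mpr hv
    have h1 : c * ‖v‖ * ‖v‖ ≤ ‖S v‖ * ‖v‖ := by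
      calc c * ‖v‖ * ‖v‖ = c * ‖v‖ ^ 2 := by ring
        _ ≤ ⟪S v, v⟫_ℝ := h v
        _ ≤ ‖S v‖ * ‖v‖ := real_inner_le_norm _ _
    exact le_of_mul_le_mul_right h1 hv'

/-- Lax–Milgram, operator form: a coercive operator on a Hilbert space is invertible. -/
lemma exists_equiv_of_coercive [CompleteSpace V] (S : V →L[ℝ] V) {c : ℝ} (hc : 0 < c)
    (h : ∀ v, c * ‖v‖ ^ 2 ≤ ⟪S v, v⟫_ℝ) :
    ∃ e : V ≃L[ℝ] V, ∀ v, e v = S v := by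
  have hco : IsCoercive (bilinOf S) := ⟨c, hc, fun v => by
    rw [bilinOf_apply]
    calc c * ‖v‖ * ‖v‖ = c * ‖v‖ ^ 2 := by ring
      _ ≤ ⟪S v, v⟫_ℝ := h v⟩
  refine ⟨hco.continuousLinearEquivOfBilin, fun v => ext_inner_right ℝ fun w => ?_⟩
  rw [hco.continuousLinearEquivOfBilin_apply, bilinOf_apply]

end Aux

section OpLevel

variable {X₁ X₂ Q : Type*}
    [NormedAddCommGroup X₁] [InnerProductSpace ℝ X₁] [CompleteSpace X₁]
    [NormedAddCommGroup X₂] [InnerProductSpace ℝ X₂] [CompleteSpace X₂]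
    [NormedAddCommGroup Q] [InnerProductSpace ℝ Q] [CompleteSpace Q]

set_option maxHeartbeats 1000000 in
/-- Uniqueness for the operator form of the dual-dual mixed problem. -/
lemma op_uniq (A : X₁ →L[ℝ] X₁) (T : X₁ →L[ℝ] X₂) (Bo : X₂ →L[ℝ] Q)
    {C₁ C₂ C₃ : ℝ} (hC₁ : 0 < C₁) (hC₂ : 0 < C₂) (hC₃ : 0 < C₃)
    (hA : ∀ ξ : X₁, C₃ * ‖ξ‖ ^ 2 ≤ ⟪A ξ, ξ⟫_ℝ)
    (hBlow : ∀ q : Q, C₁ * ‖q‖ ≤ ‖Bo.adjoint q‖)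
    (hTlow : ∀ v : X₂, Bo v = 0 → C₂ * ‖v‖ ≤ ‖T.adjoint v‖)
    (f : Q) (s s' : X₁ × X₂ × Q)
    (h : A s.1 + T.adjoint s.2.1 = 0 ∧ T s.1 + Bo.adjoint s.2.2 = 0 ∧ Bo s.2.1 = f)
    (h' : A s'.1 + T.adjoint s'.2.1 = 0 ∧ T s'.1 + Bo.adjoint s'.2.2 = 0 ∧ Bo s'.2.1 = f) :
    s = s' := by
  obtain ⟨θ, u, p⟩ := s
  obtain ⟨θ', u', p'⟩ := s'
  obtain ⟨e1, e2, e3⟩ := h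
  obtain ⟨e1', e2', e3'⟩ := h'
  simp only at e1 e2 e3 e1' e2' e3' ⊢
  set θd : X₁ := θ - θ' with hθd
  set ud : X₂ := u - u' with hud
  set pd : Q := p - p' with hpd
  have d1 : A θd + T.adjoint ud = 0 := by
    rw [hθd, hud, map_sub, map_sub]
    have h : A θ - A θ' + (T.adjoint u - T.adjoint u')
        = A θ + T.adjoint u - (A θ' + T.adjoint u') := by abel
    rw [h, e1, e1', sub_zero]
  have d2 : T θd + Bo.adjoint pd = 0 := by
    rw [hθd, hpd, map_sub, map_sub]
    have h : T θ - T θ' + (Bo.adjoint p - Bo.adjoint p')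
        = T θ + Bo.adjoint p - (T θ' + Bo.adjoint p') := by abel
    rw [h, e2, e2', sub_zero]
  have d3 : Bo ud = 0 := by
    rw [hud, map_sub, e3, e3', sub_self]
  have hinz : ⟪A θd, θd⟫_ℝ = 0 := by
    have hA1 : A θd = -(T.adjoint ud) := eq_neg_of_add_eq_zero_left d1
    have hT1 : T θd = -(Bo.adjoint pd) := eq_neg_of_add_eq_zero_left d2
    rw [hA1, inner_neg_left, ContinuousLinearMap.adjoint_inner_left, hT1,
      inner_neg_right, ContinuousLinearMap.adjoint_inner_right, d3, inner_zero_left,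
      neg_zero, neg_zero]
  have hθ0 : θd = 0 := by
    have h := hA θd
    rw [hinz] at h
    have h2 : ‖θd‖ ^ 2 ≤ 0 := by nlinarith
    have h3 : ‖θd‖ ^ 2 = 0 := le_antisymm h2 (sq_nonneg _)
    exact norm_eq_zero.mp ((pow_eq_zero_iff two_ne_zero).mp h3)
  have hTu0 : T.adjoint ud = 0 := by
    have h := d1
    rw [hθ0, map_zero, zero_add] at h
    exact h
  have hu0 : ud = 0 := by
    have h := hTlow ud d3
    rw [hTu0, norm_zero] at h
    have : ‖ud‖ = 0 := le_antisymm (by nlinarith) (norm_nonneg _)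
    exact norm_eq_zero.mp this
  have hp0 : pd = 0 := by
    have h := d2
    rw [hθ0, map_zero, zero_add] at h
    have h2 := hBlow pd
    rw [h, norm_zero] at h2
    have : ‖pd‖ = 0 := le_antisymm (by nlinarith) (norm_nonneg _)
    exact norm_eq_zero.mp this
  have hθe : θ = θ' := by rw [← sub_eq_zero]; exact hθ0
  have hue : u = u' := by rw [← sub_eq_zero]; exact hu0
  have hpe : p = p' := by rw [← sub_eq_zero]; exact hp0
  rw [hθe, hue, hpe]

set_option maxHeartbeats 2000000 in
/-- Existence and stability for the operator form of the dual-dual mixed problem. -/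
lemma op_main (A : X₁ →L[ℝ] X₁) (T : X₁ →L[ℝ] X₂) (Bo : X₂ →L[ℝ] Q)
    {C₁ C₂ C₃ : ℝ} (hC₁ : 0 < C₁) (hC₂ : 0 < C₂) (hC₃ : 0 < C₃)
    (hA : ∀ ξ : X₁, C₃ * ‖ξ‖ ^ 2 ≤ ⟪A ξ, ξ⟫_ℝ)
    (hBlow : ∀ q : Q, C₁ * ‖q‖ ≤ ‖Bo.adjoint q‖)
    (hTlow : ∀ v : X₂, Bo v = 0 → C₂ * ‖v‖ ≤ ‖T.adjoint v‖) :
    ∃ C > 0, ∀ f : Q,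
      (∃ s : X₁ × X₂ × Q,
        A s.1 + T.adjoint s.2.1 = 0 ∧ T s.1 + Bo.adjoint s.2.2 = 0 ∧ Bo s.2.1 = f) ∧
      (∀ s : X₁ × X₂ × Q,
        A s.1 + T.adjoint s.2.1 = 0 → T s.1 + Bo.adjoint s.2.2 = 0 → Bo s.2.1 = f →
        ‖s.1‖ + ‖s.2.1‖ + ‖s.2.2‖ ≤ C * ‖f‖) := by
  obtain ⟨eA, heA⟩ := exists_equiv_of_coercive A hC₃ hA
  have hS : ∀ q : Q, C₁ ^ 2 * ‖q‖ ^ 2 ≤ ⟪(Bo.comp Bo.adjoint) q, q⟫_ℝ := by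
    intro q
    have h1 : ⟪(Bo.comp Bo.adjoint) q, q⟫_ℝ = ‖Bo.adjoint q‖ ^ 2 := by
      rw [ContinuousLinearMap.comp_apply, real_inner_comm,
        ← ContinuousLinearMap.adjoint_inner_left, real_inner_self_eq_norm_sq]
    rw [h1]
    calc C₁ ^ 2 * ‖q‖ ^ 2 = (C₁ * ‖q‖) ^ 2 := by ring
      _ ≤ ‖Bo.adjoint q‖ ^ 2 := pow_le_pow_left₀ (by positivity) (hBlow q) 2
  obtain ⟨eS, heS⟩ := exists_equiv_of_coercive (Bo.comp Bo.adjoint) (pow_pos hC₁ 2) hS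
  set K : Submodule ℝ X₂ := LinearMap.ker (Bo : X₂ →ₗ[ℝ] Q) with hKdef
  haveI : CompleteSpace K := (ContinuousLinearMap.isClosed_ker Bo).completeSpace_coe
  set P : X₂ →L[ℝ] K := K.orthogonalProjectionOnto with hPdef
  set M : X₂ →L[ℝ] X₂ := T.comp ((eA.symm : X₁ →L[ℝ] X₁).comp T.adjoint) with hMdef
  have hMapp : ∀ w : X₂, M w = T (eA.symm (T.adjoint w)) := fun w => rfl
  have hApos : (0:ℝ) < ‖A‖ + 1 := by positivity
  set cA : ℝ := C₃ / (‖A‖ + 1) ^ 2 with hcAdef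
  have hcA : 0 < cA := by positivity
  have hAinv : ∀ w : X₁, cA * ‖w‖ ^ 2 ≤ ⟪eA.symm w, w⟫_ℝ := by
    intro w
    set x : X₁ := eA.symm w with hxdef
    have hAx : A x = w := by rw [← heA]; exact eA.apply_symm_apply w
    have h1 : ⟪x, w⟫_ℝ = ⟪A x, x⟫_ℝ := by rw [hAx, real_inner_comm]
    have h2 : ‖w‖ ≤ (‖A‖ + 1) * ‖x‖ := by
      calc ‖w‖ = ‖A x‖ := by rw [hAx]
        _ ≤ ‖A‖ * ‖x‖ := A.le_opNorm x
        _ ≤ (‖A‖ + 1) * ‖x‖ := by nlinarith [norm_nonneg x]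
    have h3 : ‖w‖ ^ 2 ≤ (‖A‖ + 1) ^ 2 * ‖x‖ ^ 2 := by
      calc ‖w‖ ^ 2 ≤ ((‖A‖ + 1) * ‖x‖) ^ 2 := pow_le_pow_left₀ (norm_nonneg w) h2 2
        _ = (‖A‖ + 1) ^ 2 * ‖x‖ ^ 2 := by ring
    calc cA * ‖w‖ ^ 2 ≤ cA * ((‖A‖ + 1) ^ 2 * ‖x‖ ^ 2) := mul_le_mul_of_nonneg_left h3 hcA.le
      _ = C₃ * ‖x‖ ^ 2 := by rw [hcAdef]; field_simp
      _ ≤ ⟪A x, x⟫_ℝ := hA x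
      _ = ⟪x, w⟫_ℝ := h1.symm
  set S₂ : K →L[ℝ] K := (P.comp M).comp K.subtypeL with hS₂def
  have hS₂app : ∀ v : K, S₂ v = P (M (v : X₂)) := fun v => rfl
  have hPinner : ∀ (x : X₂) (v : K), ⟪((P x : K) : X₂), (v : X₂)⟫_ℝ = ⟪x, (v : X₂)⟫_ℝ := by
    intro x v
    have h := Submodule.starProjection_inner_eq_zero x (v : X₂) v.2
    rw [hPdef]
    rw [inner_sub_left, sub_eq_zero] at h
    exact h.symm
  set cK : ℝ := cA * C₂ ^ 2 with hcKdef
  have hcK : 0 < cK := by positivity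
  have hS₂ : ∀ v : K, cK * ‖v‖ ^ 2 ≤ ⟪S₂ v, v⟫_ℝ := by
    intro v
    have hBv : Bo (v : X₂) = 0 := LinearMap.mem_ker.mp v.2
    have h1 : ⟪S₂ v, v⟫_ℝ = ⟪M (v : X₂), (v : X₂)⟫_ℝ := by
      rw [hS₂app, Submodule.coe_inner, hPinner]
    have h2 : ⟪M (v : X₂), (v : X₂)⟫_ℝ
        = ⟪eA.symm (T.adjoint (v : X₂)), T.adjoint (v : X₂)⟫_ℝ := by
      rw [hMapp]
      exact (ContinuousLinearMap.adjoint_inner_right T _ _).symm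
    have h3 := hAinv (T.adjoint (v : X₂))
    have h4 : C₂ * ‖(v : X₂)‖ ≤ ‖T.adjoint (v : X₂)‖ := hTlow _ hBv
    have h5 : (C₂ * ‖(v : X₂)‖) ^ 2 ≤ ‖T.adjoint (v : X₂)‖ ^ 2 :=
      pow_le_pow_left₀ (by positivity) h4 2
    have hnv : ‖v‖ = ‖(v : X₂)‖ := rfl
    rw [h1, h2]
    calc cK * ‖v‖ ^ 2 = cA * ((C₂ * ‖(v : X₂)‖) ^ 2) := by rw [hnv, hcKdef]; ring
      _ ≤ cA * ‖T.adjoint (v : X₂)‖ ^ 2 := mul_le_mul_of_nonneg_left h5 hcA.le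
      _ ≤ _ := h3
  obtain ⟨eK, heK⟩ := exists_equiv_of_coercive S₂ hcK hS₂
  have hBaKperp : ∀ z : Q, Bo.adjoint z ∈ Kᗮ := by
    intro z
    rw [Submodule.mem_orthogonal]
    intro v hv
    rw [ContinuousLinearMap.adjoint_inner_right, (by exact LinearMap.mem_ker.mp hv : Bo v = 0), inner_zero_left]
  have hperp_id : ∀ w : X₂, w ∈ Kᗮ → Bo.adjoint (eS.symm (Bo w)) = w := by
    intro w hw
    have hcomp : ∀ x : Q, Bo (Bo.adjoint x) = eS x := fun x => (heS x).symm
    set w' : X₂ := w - Bo.adjoint (eS.symm (Bo w)) with hw'def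
    have hBw' : Bo w' = 0 := by
      rw [hw'def, map_sub, hcomp, eS.apply_symm_apply, sub_self]
    have hwK : w' ∈ K := LinearMap.mem_ker.mpr hBw'
    have hwKp : w' ∈ Kᗮ := Submodule.sub_mem _ hw (hBaKperp _)
    have hz : w' = 0 := by
      have h0 := (Submodule.mem_orthogonal K w').mp hwKp w' hwK
      rwa [inner_self_eq_zero] at h0
    rw [hw'def, sub_eq_zero] at hz
    exact hz.symm
  have hSlow : ∀ y : Q, C₁ ^ 2 * ‖eS.symm y‖ ≤ ‖y‖ := fun y => by
    have h := lower_of_coercive hS (eS.symm y)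
    rwa [← heS, eS.apply_symm_apply] at h
  have hAlow : ∀ x : X₁, C₃ * ‖x‖ ≤ ‖A x‖ := lower_of_coercive hA
  set α : ℝ := ‖Bo.adjoint‖ / C₁ ^ 2 with hα
  have hα0 : 0 ≤ α := by positivity
  set β : ℝ := α + ‖M‖ * α / cK with hβ
  have hβ0 : 0 ≤ β := by positivity
  set γ : ℝ := ‖T.adjoint‖ * β / C₃ with hγ
  have hγ0 : 0 ≤ γ := by positivity
  set δ : ℝ := ‖T‖ * γ / C₁ with hδ
  have hδ0 : 0 ≤ δ := by positivity
  have hperp_bound : ∀ w : X₂, w ∈ Kᗮ → ‖w‖ ≤ α * ‖Bo w‖ := by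
    intro w hw
    have h1 : ‖eS.symm (Bo w)‖ ≤ ‖Bo w‖ / C₁ ^ 2 := by
      rw [le_div_iff₀ (pow_pos hC₁ 2)]
      calc ‖eS.symm (Bo w)‖ * C₁ ^ 2 = C₁ ^ 2 * ‖eS.symm (Bo w)‖ := by ring
        _ ≤ ‖Bo w‖ := hSlow _
    calc ‖w‖ = ‖Bo.adjoint (eS.symm (Bo w))‖ := by rw [hperp_id w hw]
      _ ≤ ‖Bo.adjoint‖ * ‖eS.symm (Bo w)‖ := le_opNorm _ _
      _ ≤ ‖Bo.adjoint‖ * (‖Bo w‖ / C₁ ^ 2) := mul_le_mul_of_nonneg_left h1 (norm_nonneg _)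
      _ = α * ‖Bo w‖ := by rw [hα]; ring
  refine ⟨β + γ + δ + 1, by positivity, fun f => ?_⟩
  constructor
  · -- existence
    set u₀ : X₂ := Bo.adjoint (eS.symm f) with hu₀
    have hBu₀ : Bo u₀ = f := by
      have h := heS (eS.symm f)
      rw [eS.apply_symm_apply] at h
      exact h.symm
    set ut : K := eK.symm (-(P (M u₀))) with hut
    have hS₂ut : S₂ ut = -(P (M u₀)) := by
      rw [← heK, hut, eK.apply_symm_apply]
    set u : X₂ := u₀ + (ut : X₂) with hu
    set θ : X₁ := eA.symm (-(T.adjoint u)) with hθ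
    have hAθ : A θ = -(T.adjoint u) := by
      have h := heA (eA.symm (-(T.adjoint u)))
      rw [eA.apply_symm_apply] at h
      exact h.symm
    have e1 : A θ + T.adjoint u = 0 := by rw [hAθ]; exact neg_add_cancel _
    have hBut : Bo (ut : X₂) = 0 := LinearMap.mem_ker.mp ut.2
    have e3 : Bo u = f := by rw [hu, map_add, hBu₀, hBut, add_zero]
    have hPMu : P (M u) = 0 := by
      have hMu : M u = M u₀ + M (ut : X₂) := by rw [hu, map_add]
      rw [hMu, map_add]
      have h2 : P (M (ut : X₂)) = S₂ ut := (hS₂app ut).symm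
      rw [h2, hS₂ut, add_neg_cancel]
    have hMuKp : M u ∈ Kᗮ := by
      have h := hPMu
      rw [hPdef] at h
      exact Submodule.orthogonalProjectionOnto_eq_zero_iff.mp h
    set p : Q := eS.symm (Bo (M u)) with hp
    have hBap : Bo.adjoint p = M u := hperp_id (M u) hMuKp
    have hTθ : T θ = -(M u) := by
      rw [hθ, map_neg, map_neg, ← hMapp]
    have e2 : T θ + Bo.adjoint p = 0 := by rw [hTθ, hBap]; exact neg_add_cancel _
    exact ⟨(θ, u, p), e1, e2, e3⟩
  · -- stability
    rintro ⟨θ, u, p⟩ e1 e2 e3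
    simp only at e1 e2 e3 ⊢
    have hAθ : A θ = -(T.adjoint u) := eq_neg_of_add_eq_zero_left e1
    have hθeq : θ = eA.symm (-(T.adjoint u)) := by
      have h := heA θ
      rw [hAθ] at h
      rw [← h, eA.symm_apply_apply]
    have hTθ : T θ = -(M u) := by
      rw [hθeq, hMapp, map_neg, map_neg]
    have hBap : Bo.adjoint p = M u := by
      have h := eq_neg_of_add_eq_zero_right e2
      rw [h, hTθ, neg_neg]
    have hMuKp : M u ∈ Kᗮ := by rw [← hBap]; exact hBaKperp p
    have hPMu : P (M u) = 0 := by
      rw [hPdef]; exact Submodule.orthogonalProjectionOnto_eq_zero_iff.mpr hMuKp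
    set w : X₂ := u - ((P u : K) : X₂) with hwdef
    have hwperp : w ∈ Kᗮ := by
      rw [hwdef, hPdef]; exact Submodule.sub_starProjection_mem_orthogonal u
    have hBPu : Bo ((P u : K) : X₂) = 0 := LinearMap.mem_ker.mp (P u).2
    have hBw : Bo w = f := by rw [hwdef, map_sub, hBPu, sub_zero, e3]
    have hwb : ‖w‖ ≤ α * ‖f‖ := by
      have h := hperp_bound w hwperp
      rwa [hBw] at h
    have hS₂Pu : S₂ (P u) = -(P (M w)) := by
      have hu2 : ((P u : K) : X₂) = u - w := by rw [hwdef]; abel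
      rw [hS₂app, hu2, map_sub, map_sub, hPMu, zero_sub]
    have hPu : cK * ‖P u‖ ≤ ‖M‖ * (α * ‖f‖) := by
      have h1 := lower_of_coercive hS₂ (P u)
      rw [hS₂Pu, norm_neg] at h1
      have h2 : ‖P (M w)‖ ≤ ‖M w‖ := by
        calc ‖P (M w)‖ ≤ ‖P‖ * ‖M w‖ := le_opNorm _ _
          _ ≤ 1 * ‖M w‖ := by
              refine mul_le_mul_of_nonneg_right ?_ (norm_nonneg _)
              rw [hPdef]; exact Submodule.orthogonalProjectionOnto_norm_le K
          _ = ‖M w‖ := one_mul _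
      calc cK * ‖P u‖ ≤ ‖P (M w)‖ := h1
        _ ≤ ‖M w‖ := h2
        _ ≤ ‖M‖ * ‖w‖ := le_opNorm _ _
        _ ≤ ‖M‖ * (α * ‖f‖) := mul_le_mul_of_nonneg_left hwb (norm_nonneg _)
    have hPub : ‖((P u : K) : X₂)‖ ≤ ‖M‖ * α / cK * ‖f‖ := by
      have hnP : ‖((P u : K) : X₂)‖ = ‖P u‖ := rfl
      rw [hnP, div_mul_eq_mul_div, le_div_iff₀ hcK]
      calc ‖P u‖ * cK = cK * ‖P u‖ := by ring
        _ ≤ ‖M‖ * (α * ‖f‖) := hPu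
        _ = ‖M‖ * α * ‖f‖ := by ring
    have hub : ‖u‖ ≤ β * ‖f‖ := by
      have hsplit : u = w + ((P u : K) : X₂) := by rw [hwdef]; abel
      calc ‖u‖ = ‖w + ((P u : K) : X₂)‖ := by rw [← hsplit]
        _ ≤ ‖w‖ + ‖((P u : K) : X₂)‖ := norm_add_le _ _
        _ ≤ α * ‖f‖ + ‖M‖ * α / cK * ‖f‖ := add_le_add hwb hPub
        _ = β * ‖f‖ := by rw [hβ]; ring
    have hθb : ‖θ‖ ≤ γ * ‖f‖ := by
      have h1 : C₃ * ‖θ‖ ≤ ‖T.adjoint u‖ := by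
        have h := hAlow θ
        rwa [hAθ, norm_neg] at h
      have h2 : ‖T.adjoint u‖ ≤ ‖T.adjoint‖ * (β * ‖f‖) :=
        (le_opNorm _ _).trans (mul_le_mul_of_nonneg_left hub (norm_nonneg _))
      rw [hγ, div_mul_eq_mul_div, le_div_iff₀ hC₃]
      calc ‖θ‖ * C₃ = C₃ * ‖θ‖ := by ring
        _ ≤ ‖T.adjoint‖ * (β * ‖f‖) := h1.trans h2
        _ = ‖T.adjoint‖ * β * ‖f‖ := by ring
    have hpb : ‖p‖ ≤ δ * ‖f‖ := by
      have h1 : C₁ * ‖p‖ ≤ ‖Bo.adjoint p‖ := hBlow p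
      have h2 : ‖Bo.adjoint p‖ = ‖T θ‖ := by rw [hBap, hTθ, norm_neg]
      have h3 : ‖T θ‖ ≤ ‖T‖ * (γ * ‖f‖) :=
        (le_opNorm _ _).trans (mul_le_mul_of_nonneg_left hθb (norm_nonneg _))
      rw [hδ, div_mul_eq_mul_div, le_div_iff₀ hC₁]
      calc ‖p‖ * C₁ = C₁ * ‖p‖ := by ring
        _ ≤ ‖T θ‖ := h2 ▸ h1
        _ ≤ ‖T‖ * (γ * ‖f‖) := h3
        _ = ‖T‖ * γ * ‖f‖ := by ring
    have hf0 : 0 ≤ ‖f‖ := norm_nonneg f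
    calc ‖θ‖ + ‖u‖ + ‖p‖ ≤ γ * ‖f‖ + β * ‖f‖ + δ * ‖f‖ := by linarith
      _ ≤ (β + γ + δ + 1) * ‖f‖ := by nlinarith

end OpLevel

set_option maxHeartbeats 1000000 in
/-- **Well-posedness of the continuum dual-dual (expanded) mixed problem.**
Let `X₁, X₂, Q` be real Hilbert spaces, `a, b₁, b` bounded bilinear forms.
Under the continuous inf-sup conditions for `b` and for `b₁` on the kernel of `B`,
and coercivity of `a`, for every continuous linear functional `F` on `Q` the
problem has a unique solution, with a stability bound `‖θ‖+‖u‖+‖p‖ ≤ C‖F‖`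
where `C` does not depend on `F`. -/
theorem expanded_mixed_wellposed
    {X₁ X₂ Q : Type*}
    [NormedAddCommGroup X₁] [InnerProductSpace ℝ X₁] [CompleteSpace X₁]
    [NormedAddCommGroup X₂] [InnerProductSpace ℝ X₂] [CompleteSpace X₂]
    [NormedAddCommGroup Q] [InnerProductSpace ℝ Q] [CompleteSpace Q]
    (a : X₁ →L[ℝ] X₁ →L[ℝ] ℝ)
    (b₁ : X₁ →L[ℝ] X₂ →L[ℝ] ℝ)
    (b : X₂ →L[ℝ] Q →L[ℝ] ℝ)
    (C₁ C₂ C₃ : ℝ) (hC₁ : 0 < C₁) (hC₂ : 0 < C₂) (hC₃ : 0 < C₃)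
    -- (i) inf-sup condition for b
    (hinfsup_b : ∀ q : Q,
      C₁ * ‖q‖ ≤ ⨆ v : {v : X₂ // v ≠ 0}, b v.1 q / ‖v.1‖)
    -- (ii) inf-sup condition for b₁ on the kernel K of B
    (hinfsup_b₁ : ∀ v : X₂, (∀ q : Q, b v q = 0) →
      C₂ * ‖v‖ ≤ ⨆ ξ : {ξ : X₁ // ξ ≠ 0}, b₁ ξ.1 v / ‖ξ.1‖)
    -- (iii) coercivity of a
    (hcoer : ∀ ξ : X₁, C₃ * ‖ξ‖ ^ 2 ≤ a ξ ξ) :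
    ∃ C > 0, ∀ F : Q →L[ℝ] ℝ,
      (∃! s : X₁ × X₂ × Q,
        (∀ ξ : X₁, a s.1 ξ + b₁ ξ s.2.1 = 0) ∧
        (∀ v : X₂, b₁ s.1 v + b v s.2.2 = 0) ∧
        (∀ q : Q, b s.2.1 q = F q)) ∧
      (∀ (θ : X₁) (u : X₂) (p : Q),
        (∀ ξ : X₁, a θ ξ + b₁ ξ u = 0) →
        (∀ v : X₂, b₁ θ v + b v p = 0) →
        (∀ q : Q, b u q = F q) →
        ‖θ‖ + ‖u‖ + ‖p‖ ≤ C * ‖F‖) := by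
  classical
  set A : X₁ →L[ℝ] X₁ := rieszOp a with hAdef
  set T : X₁ →L[ℝ] X₂ := rieszOp b₁ with hTdef
  set Bo : X₂ →L[ℝ] Q := rieszOp b with hBdef
  have iA : ∀ (θ ξ : X₁), ⟪A θ, ξ⟫_ℝ = a θ ξ := fun θ ξ => rieszOp_inner a θ ξ
  have iT : ∀ (ξ : X₁) (v : X₂), ⟪T ξ, v⟫_ℝ = b₁ ξ v := fun ξ v => rieszOp_inner b₁ ξ v
  have iB : ∀ (u : X₂) (q : Q), ⟪Bo u, q⟫_ℝ = b u q := fun u q => rieszOp_inner b u q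
  have iTa : ∀ (u : X₂) (ξ : X₁), ⟪T.adjoint u, ξ⟫_ℝ = b₁ ξ u := fun u ξ => by
    rw [ContinuousLinearMap.adjoint_inner_left, real_inner_comm, iT]
  have iBa : ∀ (p : Q) (v : X₂), ⟪Bo.adjoint p, v⟫_ℝ = b v p := fun p v => by
    rw [ContinuousLinearMap.adjoint_inner_left, real_inner_comm, iB]
  have hA : ∀ ξ : X₁, C₃ * ‖ξ‖ ^ 2 ≤ ⟪A ξ, ξ⟫_ℝ := fun ξ => by
    rw [iA]; exact hcoer ξ
  have hBlow : ∀ q : Q, C₁ * ‖q‖ ≤ ‖Bo.adjoint q‖ := by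
    intro q
    refine (hinfsup_b q).trans (Real.iSup_le (fun v => ?_) (norm_nonneg _))
    have hv : (0:ℝ) < ‖v.1‖ := norm_pos_iff.mpr v.2
    rw [div_le_iff₀ hv]
    calc b v.1 q = ⟪Bo.adjoint q, v.1⟫_ℝ := (iBa q v.1).symm
      _ ≤ ‖Bo.adjoint q‖ * ‖v.1‖ := real_inner_le_norm _ _
  have hTlow : ∀ v : X₂, Bo v = 0 → C₂ * ‖v‖ ≤ ‖T.adjoint v‖ := by
    intro v hv
    have hker : ∀ q : Q, b v q = 0 := fun q => by rw [← iB, hv, inner_zero_left]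
    refine (hinfsup_b₁ v hker).trans (Real.iSup_le (fun ξ => ?_) (norm_nonneg _))
    have hξ : (0:ℝ) < ‖ξ.1‖ := norm_pos_iff.mpr ξ.2
    rw [div_le_iff₀ hξ]
    calc b₁ ξ.1 v = ⟪T.adjoint v, ξ.1⟫_ℝ := (iTa v ξ.1).symm
      _ ≤ ‖T.adjoint v‖ * ‖ξ.1‖ := real_inner_le_norm _ _
  obtain ⟨C, hCpos, hC⟩ := op_main A T Bo hC₁ hC₂ hC₃ hA hBlow hTlow
  refine ⟨C, hCpos, fun F => ?_⟩
  set f : Q := (InnerProductSpace.toDual ℝ Q).symm F with hf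
  have hfF : ∀ q : Q, ⟪f, q⟫_ℝ = F q := fun q => InnerProductSpace.toDual_symm_apply
  have hfn : ‖f‖ = ‖F‖ := (InnerProductSpace.toDual ℝ Q).symm.norm_map F
  have key1 : ∀ (θ : X₁) (u : X₂), (∀ ξ : X₁, a θ ξ + b₁ ξ u = 0) ↔ A θ + T.adjoint u = 0 := by
    intro θ u
    have hin : ∀ ξ : X₁, ⟪A θ + T.adjoint u, ξ⟫_ℝ = a θ ξ + b₁ ξ u := fun ξ => by
      rw [inner_add_left, iA, iTa]
    constructor
    · intro h
      exact eq_zero_of_inner_right _ (fun ξ => by rw [hin, h])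
    · intro h ξ
      rw [← hin, h, inner_zero_left]
  have key2 : ∀ (θ : X₁) (p : Q), (∀ v : X₂, b₁ θ v + b v p = 0) ↔ T θ + Bo.adjoint p = 0 := by
    intro θ p
    have hin : ∀ v : X₂, ⟪T θ + Bo.adjoint p, v⟫_ℝ = b₁ θ v + b v p := fun v => by
      rw [inner_add_left, iT, iBa]
    constructor
    · intro h
      exact eq_zero_of_inner_right _ (fun v => by rw [hin, h])
    · intro h v
      rw [← hin, h, inner_zero_left]
  have key3 : ∀ u : X₂, (∀ q : Q, b u q = F q) ↔ Bo u = f := by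
    intro u
    have hin : ∀ q : Q, ⟪Bo u - f, q⟫_ℝ = b u q - F q := fun q => by
      rw [inner_sub_left, iB, hfF]
    constructor
    · intro h
      have h0 : Bo u - f = 0 :=
        eq_zero_of_inner_right _ (fun q => by rw [hin, h, sub_self])
      exact sub_eq_zero.mp h0
    · intro h q
      have h0 : (0:ℝ) = b u q - F q := by
        rw [← hin q, h, sub_self, inner_zero_left]
      linarith
  constructor
  · obtain ⟨⟨s₀, hs₀⟩, _⟩ := hC f
    refine ⟨s₀, ⟨(key1 _ _).mpr hs₀.1, (key2 _ _).mpr hs₀.2.1, (key3 _).mpr hs₀.2.2⟩, ?_⟩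
    rintro s hs
    exact op_uniq A T Bo hC₁ hC₂ hC₃ hA hBlow hTlow f s s₀
      ⟨(key1 _ _).mp hs.1, (key2 _ _).mp hs.2.1, (key3 _).mp hs.2.2⟩ hs₀
  · intro θ u p h1 h2 h3
    have hb := (hC f).2 (θ, u, p)
      ((key1 _ _).mp h1) ((key2 _ _).mp h2) ((key3 _).mp h3)
    simp only at hb
    rw [hfn] at hb
    exact hb
end

section
/- Let X_{1,h} ⊆ X₁, X_{2,h} ⊆ X₂ and Q_h ⊆ Q be finite-dimensional subspaces and let F_h be a linear functional on Q_h. Assume: (1) there is a constant C₁ > 0 such that for every q_h ∈ Q_h, sup over v_h ∈ X_{2,h} \ {0} of b(v_h, q_h)/‖v_h‖_{X₂} ≥ C₁ ‖q_h‖_Q; (2) letting ker B_h := {v_h ∈ X_{2,h} : b(v_h, q_h) = 0 for all q_h ∈ Q_h}, there is a constant C₂ > 0 such that for every v_h ∈ ker B_h, sup over ξ_h ∈ X_{1,h} \ {0} of b₁(ξ_h, v_h)/‖ξ_h‖_{X₁} ≥ C₂ ‖v_h‖_{X₂}; (3) there are constants C₃, C₄ > 0 such that C₃ ‖ξ_h‖²_{X₁}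 ≤ a(ξ_h, ξ_h) ≤ C₄ ‖ξ_h‖²_{X₁} for all ξ_h ∈ X_{1,h}. Then there exists a unique (θ_h, u_h, p_h) ∈ X_{1,h} × X_{2,h} × Q_h satisfying a(θ_h, ξ_h) + b₁(ξ_h, u_h) = 0 for all ξ_h ∈ X_{1,h}, b₁(θ_h, v_h) + b(v_h, p_h) = 0 for all v_h ∈ X_{2,h}, and b(u_h, q_h) = F_h(q_h) for all q_h ∈ Q_h. -/
set_option maxHeartbeats 2000000 in
/-- **Well-posedness of the discrete dual-dual (expanded) mixed problem.**
Let `X₁, X₂, Q` be real Hilbert spaces, `a, b₁, b` bounded bilinear forms, and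
`X1h ⊆ X₁`, `X2h ⊆ X₂`, `Qh ⊆ Q` finite-dimensional subspaces, `Fh` a linear
functional on `Qh`.  Under the discrete inf-sup conditions (1), (2) and the
coercivity/boundedness condition (3), the discrete problem has a unique
solution `(θh, uh, ph) ∈ X1h × X2h × Qh`. -/
theorem discrete_expanded_mixed_wellposed
    {X₁ X₂ Q : Type*}
    [NormedAddCommGroup X₁] [InnerProductSpace ℝ X₁] [CompleteSpace X₁]
    [NormedAddCommGroup X₂] [InnerProductSpace ℝ X₂] [CompleteSpace X₂]
    [NormedAddCommGroup Q] [InnerProductSpace ℝ Q] [CompleteSpace Q]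
    (a : X₁ →L[ℝ] X₁ →L[ℝ] ℝ)
    (b₁ : X₁ →L[ℝ] X₂ →L[ℝ] ℝ)
    (b : X₂ →L[ℝ] Q →L[ℝ] ℝ)
    (X1h : Submodule ℝ X₁) (X2h : Submodule ℝ X₂) (Qh : Submodule ℝ Q)
    [FiniteDimensional ℝ X1h] [FiniteDimensional ℝ X2h] [FiniteDimensional ℝ Qh]
    (Fh : Qh →ₗ[ℝ] ℝ)
    (C₁ C₂ C₃ C₄ : ℝ) (hC₁ : 0 < C₁) (hC₂ : 0 < C₂) (hC₃ : 0 < C₃) (hC₄ : 0 < C₄)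
    -- (1) discrete inf-sup condition for b
    (hinfsup_b : ∀ qh : Qh,
      C₁ * ‖(qh : Q)‖ ≤
        ⨆ vh : {vh : X2h // vh ≠ 0}, b (vh.1 : X₂) (qh : Q) / ‖(vh.1 : X₂)‖)
    -- (2) discrete inf-sup condition for b₁ on ker Bh
    (hinfsup_b₁ : ∀ vh : X2h, (∀ qh : Qh, b (vh : X₂) (qh : Q) = 0) →
      C₂ * ‖(vh : X₂)‖ ≤
        ⨆ ξh : {ξh : X1h // ξh ≠ 0}, b₁ (ξh.1 : X₁) (vh : X₂) / ‖(ξh.1 : X₁)‖)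
    -- (3) coercivity and boundedness of a on X1h
    (hcoer : ∀ ξh : X1h,
      C₃ * ‖(ξh : X₁)‖ ^ 2 ≤ a (ξh : X₁) (ξh : X₁) ∧
      a (ξh : X₁) (ξh : X₁) ≤ C₄ * ‖(ξh : X₁)‖ ^ 2) :
    ∃! s : X1h × X2h × Qh,
      (∀ ξh : X1h, a (s.1 : X₁) (ξh : X₁) + b₁ (ξh : X₁) (s.2.1 : X₂) = 0) ∧
      (∀ vh : X2h, b₁ (s.1 : X₁) (vh : X₂) + b (vh : X₂) (s.2.2 : Q) = 0) ∧
      (∀ qh : Qh, b (s.2.1 : X₂) (qh : Q) = Fh qh) := by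
  classical
  -- restricted bilinear forms
  set A : X1h →ₗ[ℝ] X1h →ₗ[ℝ] ℝ :=
    LinearMap.mk₂ ℝ (fun θ ξ : X1h => a (θ : X₁) (ξ : X₁))
      (by intros; simp [map_add]) (by intros; simp)
      (by intros; simp [map_add]) (by intros; simp) with hA
  set B₁ : X1h →ₗ[ℝ] X2h →ₗ[ℝ] ℝ :=
    LinearMap.mk₂ ℝ (fun ξ v => b₁ (ξ : X₁) (v : X₂))
      (by intros; simp [map_add]) (by intros; simp)
      (by intros; simp [map_add]) (by intros; simp) with hB₁
  set B : X2h →ₗ[ℝ] Qh →ₗ[ℝ] ℝ :=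
    LinearMap.mk₂ ℝ (fun v q => b (v : X₂) (q : Q))
      (by intros; simp [map_add]) (by intros; simp)
      (by intros; simp [map_add]) (by intros; simp) with hB
  set π₁ : (X1h × X2h × Qh) →ₗ[ℝ] X1h := LinearMap.fst ℝ X1h (X2h × Qh) with hπ₁
  set π₂ : (X1h × X2h × Qh) →ₗ[ℝ] X2h :=
    (LinearMap.fst ℝ X2h Qh).comp (LinearMap.snd ℝ X1h (X2h × Qh)) with hπ₂
  set π₃ : (X1h × X2h × Qh) →ₗ[ℝ] Qh :=
    (LinearMap.snd ℝ X2h Qh).comp (LinearMap.snd ℝ X1h (X2h × Qh)) with hπ₃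
  set L : (X1h × X2h × Qh) →ₗ[ℝ] (X1h →ₗ[ℝ] ℝ) × (X2h →ₗ[ℝ] ℝ) × (Qh →ₗ[ℝ] ℝ) :=
    (A.comp π₁ + B₁.flip.comp π₂).prod
      ((B₁.comp π₁ + B.flip.comp π₃).prod (B.comp π₂)) with hL
  have happ : ∀ (s : X1h × X2h × Qh),
      L s = (A s.1 + B₁.flip s.2.1, B₁ s.1 + B.flip s.2.2, B s.2.1) := by
    intro s; rfl
  -- key reformulation
  have key : ∀ s : X1h × X2h × Qh,
      ((∀ ξh : X1h, a (s.1 : X₁) (ξh : X₁) + b₁ (ξh : X₁) (s.2.1 : X₂) = 0) ∧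
       (∀ vh : X2h, b₁ (s.1 : X₁) (vh : X₂) + b (vh : X₂) (s.2.2 : Q) = 0) ∧
       (∀ qh : Qh, b (s.2.1 : X₂) (qh : Q) = Fh qh)) ↔ L s = (0, 0, Fh) := by
    intro s
    rw [happ, Prod.ext_iff, Prod.ext_iff]
    simp only [LinearMap.ext_iff, LinearMap.add_apply, LinearMap.flip_apply,
      LinearMap.mk₂_apply, LinearMap.zero_apply, hA, hB₁, hB]

  -- injectivity
  have hinj : Function.Injective L := by
    rw [← LinearMap.ker_eq_bot, LinearMap.ker_eq_bot']
    rintro ⟨θ, u, p⟩ hm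
    rw [happ] at hm
    have h1 : A θ + B₁.flip u = 0 := congrArg Prod.fst hm
    have h2 : B₁ θ + B.flip p = 0 := congrArg Prod.fst (congrArg Prod.snd hm)
    have h3 : B u = 0 := congrArg Prod.snd (congrArg Prod.snd hm)
    have e1 : ∀ ξ : X1h, a (θ : X₁) (ξ : X₁) + b₁ (ξ : X₁) (u : X₂) = 0 := by
      intro ξ
      have h := LinearMap.ext_iff.1 h1 ξ
      simp only [hA, hB₁, LinearMap.add_apply, LinearMap.flip_apply,
        LinearMap.mk₂_apply, LinearMap.zero_apply] at h
      exact h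
    have e2 : ∀ v : X2h, b₁ (θ : X₁) (v : X₂) + b (v : X₂) (p : Q) = 0 := by
      intro v
      have h := LinearMap.ext_iff.1 h2 v
      simp only [hB₁, hB, LinearMap.add_apply, LinearMap.flip_apply,
        LinearMap.mk₂_apply, LinearMap.zero_apply] at h
      exact h
    have e3 : ∀ q : Qh, b (u : X₂) (q : Q) = 0 := by
      intro q
      have h := LinearMap.ext_iff.1 h3 q
      simp only [hB, LinearMap.mk₂_apply, LinearMap.zero_apply] at h
      exact h
    clear hm h1 h2 h3 happ key hA hB₁ hB hπ₁ hπ₂ hπ₃ hL L A B₁ B π₁ π₂ π₃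
    -- θ = 0
    have hb₁θu : b₁ (θ : X₁) (u : X₂) = 0 := by
      have h := e2 u
      rw [e3 p, add_zero] at h
      exact h
    have haθθ : a (θ : X₁) (θ : X₁) = 0 := by
      have h := e1 θ
      rw [hb₁θu, add_zero] at h
      exact h
    have hθ : θ = 0 := by
      have hc := (hcoer θ).1
      rw [haθθ] at hc
      have hc' : C₃ * ‖(θ : X₁)‖ ^ 2 ≤ C₃ * 0 := by rwa [mul_zero]
      have hle : ‖(θ : X₁)‖ ^ 2 ≤ 0 := le_of_mul_le_mul_left hc' hC₃
      have hsq : ‖(θ : X₁)‖ ^ 2 = 0 := le_antisymm hle (sq_nonneg _)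
      have hn : ‖(θ : X₁)‖ = 0 := by
        exact pow_eq_zero_iff two_ne_zero |>.1 hsq
      ext
      simpa using norm_eq_zero.1 hn
    -- p = 0
    have hbp : ∀ v : X2h, b (v : X₂) (p : Q) = 0 := by
      intro v
      have h := e2 v
      rw [hθ] at h
      simp only [ZeroMemClass.coe_zero, map_zero, ContinuousLinearMap.zero_apply,
        zero_add] at h
      exact h
    have hp : p = 0 := by
      have hs := hinfsup_b p
      have : (⨆ vh : {vh : X2h // vh ≠ 0}, b (vh.1 : X₂) (p : Q) / ‖(vh.1 : X₂)‖) = 0 := by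
        have : (fun vh : {vh : X2h // vh ≠ 0} => b (vh.1 : X₂) (p : Q) / ‖(vh.1 : X₂)‖)
            = fun _ => (0 : ℝ) := by
          funext vh; rw [hbp vh.1]; simp
        rw [iSup_congr (fun vh => congrFun this vh), Real.iSup_const_zero]
      rw [this] at hs
      have hs' : C₁ * ‖(p : Q)‖ ≤ C₁ * 0 := by rwa [mul_zero]
      have hn : ‖(p : Q)‖ = 0 := le_antisymm (le_of_mul_le_mul_left hs' hC₁) (norm_nonneg _)
      ext
      simpa using norm_eq_zero.1 hn
    -- u = 0
    have hbu : ∀ ξ : X1h, b₁ (ξ : X₁) (u : X₂) = 0 := by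
      intro ξ
      have h := e1 ξ
      rw [hθ] at h
      simp only [ZeroMemClass.coe_zero, map_zero, ContinuousLinearMap.zero_apply,
        zero_add] at h
      exact h
    have hu : u = 0 := by
      have hs := hinfsup_b₁ u e3
      have : (⨆ ξh : {ξh : X1h // ξh ≠ 0}, b₁ (ξh.1 : X₁) (u : X₂) / ‖(ξh.1 : X₁)‖) = 0 := by
        have : (fun ξh : {ξh : X1h // ξh ≠ 0} => b₁ (ξh.1 : X₁) (u : X₂) / ‖(ξh.1 : X₁)‖)
            = fun _ => (0 : ℝ) := by
          funext ξh; rw [hbu ξh.1]; simp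
        rw [iSup_congr (fun ξh => congrFun this ξh), Real.iSup_const_zero]
      rw [this] at hs
      have hs' : C₂ * ‖(u : X₂)‖ ≤ C₂ * 0 := by rwa [mul_zero]
      have hn : ‖(u : X₂)‖ = 0 := le_antisymm (le_of_mul_le_mul_left hs' hC₂) (norm_nonneg _)
      ext
      simpa using norm_eq_zero.1 hn
    simp only [hθ, hu, hp, Prod.mk_eq_zero]
    exact ⟨trivial, trivial, trivial⟩
  -- dimension count and bijectivity
  have hfr : Module.finrank ℝ (X1h × X2h × Qh)
      = Module.finrank ℝ ((X1h →ₗ[ℝ] ℝ) × (X2h →ₗ[ℝ] ℝ) × (Qh →ₗ[ℝ] ℝ)) := by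
    rw [Module.finrank_prod, Module.finrank_prod, Module.finrank_prod, Module.finrank_prod]
    rw [Subspace.dual_finrank_eq, Subspace.dual_finrank_eq, Subspace.dual_finrank_eq]
  have hbij : Function.Bijective L := (L.linearEquivOfInjective hinj hfr).bijective
  obtain ⟨s, hs, huniq⟩ := hbij.existsUnique (0, 0, Fh)
  exact ⟨s, (key s).2 hs, fun y hy => huniq y ((key y).1 hy)⟩
end

section
/- Let X₂ ⊆ X̂₂ be a closed subspace and suppose (θ, u, p) ∈ X₁ × X₂ × Q satisfies a(θ, ξ) + b₁(ξ, u) = 0 for all ξ ∈ X₁, b₁(θ, v) + b(v, p) = 0 for all v ∈ X₂, and b(u, q) = F(q) for all q ∈ Q, where F is a continuous linear functional on Q. Let X_{1,h} ⊆ X₁, X_{2,h} ⊆ X̂₂ and Q_h ⊆ Q be finite-dimensional subspaces and let (θ_h, u_h, p_h) ∈ X_{1,h} × X_{2,h} × Q_h satisfy a(θ_h, ξ_h) + b₁(ξ_h, u_h) = 0 for all ξ_h ∈ X_{1,h}, b₁(θ_h, v_h) + b(v_h, p_h) = 0 for all v_h ∈ X_{2,h}, and b(u_h, q_h) = F(q_h)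 for all q_h ∈ Q_h. Assume the discrete inf-sup and coercivity conditions: (1) there is C₁ > 0 with sup over v_h ∈ X_{2,h} \ {0} of b(v_h, q_h)/‖v_h‖ ≥ C₁ ‖q_h‖ for all q_h ∈ Q_h; (2) with ker B_h := {v_h ∈ X_{2,h} : b(v_h, q_h) = 0 for all q_h ∈ Q_h}, there is C₂ > 0 with sup over ξ_h ∈ X_{1,h} \ {0} of b₁(ξ_h, v_h)/‖ξ_h‖ ≥ C₂ ‖v_h‖ for all v_h ∈ ker B_h; (3) there are C₃, C₄ > 0 with C₃ ‖ξ_h‖² ≤ a(ξ_h, ξ_h) ≤ C₄ ‖ξ_h‖² for all ξ_h ∈ X_{1,h}. Then there exists a constant C > 0, depending only on the norms of b₁ and b and on C₁, C₂, C₃, C₄, such that ‖θ − θ_h‖_{X₁} + ‖u − u_h‖_{X̂₂} + ‖p − p_h‖_Q ≤ C [ inf over (ξ_h, v_h, q_h) ∈ X_{1,h} × X_{2,h} × Q_h of (‖θ − ξ_h‖_{X₁} + ‖u − v_h‖_{X̂₂} + ‖p − q_h‖_Q) + sup over v_h ∈ X_{2,h} \ {0} of (−b₁(θ, v_h) − b(v_h,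 p))/‖v_h‖_{X̂₂} ]. -/
open RealInnerProductSpace

lemma exists_preimage_of_adjoint_lower_bound' {E F : Type*}
    [NormedAddCommGroup E] [InnerProductSpace ℝ E] [FiniteDimensional ℝ E]
    [NormedAddCommGroup F] [InnerProductSpace ℝ F] [FiniteDimensional ℝ F]
    (B : E →ₗ[ℝ] F) {c : ℝ} (hc : 0 < c)
    (h : ∀ y : F, c * ‖y‖ ≤ ‖LinearMap.adjoint B y‖) (y : F) :
    ∃ z : E, B z = y ∧ c * ‖z‖ ≤ ‖y‖ := by
  set Bt := LinearMap.adjoint B with hBt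
  have hinner : ∀ w w' : F, ⟪B (Bt w), w'⟫ = ⟪Bt w, Bt w'⟫ := by
    intro w w'
    rw [real_inner_comm, ← LinearMap.adjoint_inner_left B (Bt w) w', ← hBt,
      real_inner_comm]
  have hinj : Function.Injective (B ∘ₗ Bt) := by
    intro w w' hww'
    have hz : B (Bt (w - w')) = 0 := by
      simp only [map_sub]
      simp only [LinearMap.comp_apply] at hww'
      rw [hww', sub_self]
    have h2 : ⟪Bt (w - w'), Bt (w - w')⟫ = 0 := by
      rw [← hinner, hz, inner_zero_left]
    have h3 : Bt (w - w') = 0 := by rwa [inner_self_eq_zero] at h2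
    have h4 := h (w - w')
    rw [h3, norm_zero] at h4
    have h5 : ‖w - w'‖ ≤ 0 := by nlinarith [norm_nonneg (w - w')]
    have h6 : w - w' = 0 := by rw [← norm_le_zero_iff]; exact h5
    exact sub_eq_zero.mp h6
  obtain ⟨w, hw⟩ := (LinearMap.injective_iff_surjective.mp hinj) y
  simp only [LinearMap.comp_apply] at hw
  refine ⟨Bt w, hw, ?_⟩
  have key : ‖Bt w‖ ^ 2 = ⟪w, y⟫ := by
    rw [← real_inner_self_eq_norm_sq, ← hinner, hw, real_inner_comm]
  have hwy : ⟪w, y⟫ ≤ ‖w‖ * ‖y‖ := real_inner_le_norm w y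
  have hBtw : c * ‖w‖ ≤ ‖Bt w‖ := h w
  have hcw : c ^ 2 * ‖w‖ ^ 2 ≤ ‖w‖ * ‖y‖ := by
    nlinarith [norm_nonneg (Bt w), norm_nonneg w, hc.le, key, hwy,
      mul_self_le_mul_self (by positivity : (0:ℝ) ≤ c * ‖w‖) hBtw]
  rcases eq_or_lt_of_le (norm_nonneg w) with hw0 | hw0
  · have hwz : w = 0 := by rw [← norm_eq_zero]; exact hw0.symm
    have hbz : Bt w = 0 := by rw [hwz, map_zero]
    rw [hbz, norm_zero, mul_zero]
    exact norm_nonneg y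
  · have hcw2 : c ^ 2 * ‖w‖ ≤ ‖y‖ := by
      have h' : c ^ 2 * ‖w‖ * ‖w‖ ≤ ‖y‖ * ‖w‖ := by nlinarith
      exact le_of_mul_le_mul_right h' hw0
    have hsq : (c * ‖Bt w‖) ^ 2 ≤ ‖y‖ ^ 2 := by
      nlinarith [norm_nonneg y, hc.le, key, hwy, norm_nonneg w, hw0.le]
    have h1 : 0 ≤ c * ‖Bt w‖ := by positivity
    nlinarith [norm_nonneg y]

lemma exists_discrete_op' {X Q' : Type*} [NormedAddCommGroup X] [InnerProductSpace ℝ X]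
    [NormedAddCommGroup Q'] [InnerProductSpace ℝ Q']
    (b : X →L[ℝ] Q' →L[ℝ] ℝ) (X2h : Submodule ℝ X) (Qh : Submodule ℝ Q')
    [FiniteDimensional ℝ Qh] :
    ∃ B : X2h →ₗ[ℝ] Qh, ∀ (v : X2h) (q : Qh), ⟪B v, q⟫ = b (v : X) (q : Q') := by
  refine ⟨{ toFun := fun v => (InnerProductSpace.toDual ℝ Qh).symm
              ((b (v : X)).comp Qh.subtypeL),
            map_add' := ?_, map_smul' := ?_ }, ?_⟩
  · intro x y
    apply ext_inner_right ℝ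
    intro q
    simp [InnerProductSpace.toDual_symm_apply, inner_add_left]
  · intro c x
    apply ext_inner_right ℝ
    intro q
    simp [InnerProductSpace.toDual_symm_apply, inner_smul_left]
  · intro v q
    simp [InnerProductSpace.toDual_symm_apply]


set_option maxHeartbeats 1000000 in
/-- **Strang-type lemma for the dual-dual (expanded) mixed formulation.**
With `X₂` a closed subspace of the ambient Hilbert space `X̂₂` and
finite-dimensional discrete subspaces `X1h ⊆ X₁`, `X2h ⊆ X̂₂` (possibly
nonconforming) and `Qh ⊆ Q`, under the discrete inf-sup and coercivity
conditions the error of the discrete solution is bounded by a constant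
(independent of `F` and of the solutions) times the sum of the
best-approximation error and the consistency error. -/
theorem strang_lemma_expanded_mixed
    {X₁ X₂hat Q : Type*}
    [NormedAddCommGroup X₁] [InnerProductSpace ℝ X₁] [CompleteSpace X₁]
    [NormedAddCommGroup X₂hat] [InnerProductSpace ℝ X₂hat] [CompleteSpace X₂hat]
    [NormedAddCommGroup Q] [InnerProductSpace ℝ Q] [CompleteSpace Q]
    (a : X₁ →L[ℝ] X₁ →L[ℝ] ℝ)
    (b₁ : X₁ →L[ℝ] X₂hat →L[ℝ] ℝ)
    (b : X₂hat →L[ℝ] Q →L[ℝ] ℝ)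
    (X₂ : Submodule ℝ X₂hat) (hX₂closed : IsClosed (X₂ : Set X₂hat))
    (X1h : Submodule ℝ X₁) (X2h : Submodule ℝ X₂hat) (Qh : Submodule ℝ Q)
    [FiniteDimensional ℝ X1h] [FiniteDimensional ℝ X2h] [FiniteDimensional ℝ Qh]
    (C₁ C₂ C₃ C₄ : ℝ) (hC₁ : 0 < C₁) (hC₂ : 0 < C₂) (hC₃ : 0 < C₃) (hC₄ : 0 < C₄)
    -- (1) discrete inf-sup condition for b
    (hinfsup_b : ∀ qh : Qh,
      C₁ * ‖(qh : Q)‖ ≤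
        ⨆ vh : {vh : X2h // vh ≠ 0}, b (vh.1 : X₂hat) (qh : Q) / ‖(vh.1 : X₂hat)‖)
    -- (2) discrete inf-sup condition for b₁ on ker Bh
    (hinfsup_b₁ : ∀ vh : X2h, (∀ qh : Qh, b (vh : X₂hat) (qh : Q) = 0) →
      C₂ * ‖(vh : X₂hat)‖ ≤
        ⨆ ξh : {ξh : X1h // ξh ≠ 0}, b₁ (ξh.1 : X₁) (vh : X₂hat) / ‖(ξh.1 : X₁)‖)
    -- (3) coercivity and boundedness of a on X1h
    (hcoer : ∀ ξh : X1h,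
      C₃ * ‖(ξh : X₁)‖ ^ 2 ≤ a (ξh : X₁) (ξh : X₁) ∧
      a (ξh : X₁) (ξh : X₁) ≤ C₄ * ‖(ξh : X₁)‖ ^ 2) :
    ∃ C > 0, ∀ (F : Q →L[ℝ] ℝ)
      (θ : X₁) (u : X₂hat) (p : Q) (θh : X₁) (uh : X₂hat) (ph : Q),
      -- the continuum solution
      u ∈ X₂ →
      (∀ ξ : X₁, a θ ξ + b₁ ξ u = 0) →
      (∀ v : X₂hat, v ∈ X₂ → b₁ θ v + b v p = 0) →
      (∀ q : Q, b u q = F q) →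
      -- the discrete solution
      θh ∈ X1h → uh ∈ X2h → ph ∈ Qh →
      (∀ ξh : X1h, a θh (ξh : X₁) + b₁ (ξh : X₁) uh = 0) →
      (∀ vh : X2h, b₁ θh (vh : X₂hat) + b (vh : X₂hat) ph = 0) →
      (∀ qh : Qh, b uh (qh : Q) = F (qh : Q)) →
      ‖θ - θh‖ + ‖u - uh‖ + ‖p - ph‖ ≤
        C * ((⨅ w : X1h × X2h × Qh,
                (‖θ - (w.1 : X₁)‖ + ‖u - (w.2.1 : X₂hat)‖ + ‖p - (w.2.2 : Q)‖)) +
             ⨆ vh : {vh : X2h // vh ≠ 0},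
               (-(b₁ θ (vh.1 : X₂hat)) - b (vh.1 : X₂hat) p) / ‖(vh.1 : X₂hat)‖) := by
  -- constants
  set K0 : ℝ := max ‖a‖ (max ‖b₁‖ (max ‖b‖ 1)) with hK0def
  have hK0a : ‖a‖ ≤ K0 := le_max_left _ _
  have hK0b₁ : ‖b₁‖ ≤ K0 := le_max_of_le_right (le_max_left _ _)
  have hK0b : ‖b‖ ≤ K0 := le_max_of_le_right (le_max_of_le_right (le_max_left _ _))
  have hK0one : (1:ℝ) ≤ K0 := le_max_of_le_right (le_max_of_le_right (le_max_right _ _))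
  have hK0pos : 0 < K0 := lt_of_lt_of_le one_pos hK0one
  set P : ℝ := 2*C₁*C₂*K0 + 3*C₁*K0^2 + C₂*K0^2 with hPdef
  have hPpos : 0 < P := by positivity
  set P2 : ℝ := 6*C₁*K0^2 + 3*K0^3 with hP2def
  have hP2pos : 0 < P2 := by positivity
  set Kt : ℝ := max 1 ((P + P2)/(C₁*C₂*C₃)) with hKtdef
  have hKt1 : (1:ℝ) ≤ Kt := le_max_left _ _
  have hKt0 : 0 ≤ Kt := le_trans zero_le_one hKt1
  set Kz : ℝ := K0/C₁ with hKzdef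
  have hKz0 : 0 ≤ Kz := by positivity
  set Ku : ℝ := (2*K0 + K0*Kt + K0*Kz)/C₂ with hKudef
  have hKu0 : 0 ≤ Ku := by positivity
  set Kp : ℝ := (3*K0 + K0*Kt)/C₁ with hKpdef
  have hKp0 : 0 ≤ Kp := by positivity
  set Cf : ℝ := 1 + Kt + Ku + Kz + Kp with hCfdef
  have hCf : 0 < Cf := by positivity
  refine ⟨Cf, hCf, ?_⟩
  intro F θ u p θh uh ph humem hc1 hc2 hc3 hθmem huhmem hpmem hd1 hd2 hd3
  -- the consistency sup
  set S : ℝ := ⨆ vh : {vh : X2h // vh ≠ 0},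
      (-(b₁ θ (vh.1 : X₂hat)) - b (vh.1 : X₂hat) p) / ‖(vh.1 : X₂hat)‖ with hSdef
  have hSbdd : BddAbove (Set.range fun vh : {vh : X2h // vh ≠ 0} =>
      (-(b₁ θ (vh.1 : X₂hat)) - b (vh.1 : X₂hat) p) / ‖(vh.1 : X₂hat)‖) := by
    refine ⟨‖b₁ θ‖ + ‖b‖ * ‖p‖, ?_⟩
    rintro x ⟨⟨v, hv⟩, rfl⟩
    have hvpos : 0 < ‖(v : X₂hat)‖ := by
      rw [norm_pos_iff]
      exact fun h => hv (Subtype.coe_injective h)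
    rw [div_le_iff₀ hvpos]
    have h1 : |b₁ θ (v : X₂hat)| ≤ ‖b₁ θ‖ * ‖(v : X₂hat)‖ := by
      rw [← Real.norm_eq_abs]; exact (b₁ θ).le_opNorm _
    have h2 : |b (v : X₂hat) p| ≤ ‖b‖ * ‖(v : X₂hat)‖ * ‖p‖ := by
      rw [← Real.norm_eq_abs]; exact b.le_opNorm₂ _ _
    nlinarith [abs_nonneg (b₁ θ (v : X₂hat)), le_abs_self (b₁ θ (v:X₂hat)),
      neg_abs_le (b₁ θ (v:X₂hat)), le_abs_self (b (v:X₂hat) p), neg_abs_le (b (v:X₂hat) p)]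
  have hS0 : 0 ≤ S := by
    by_cases hne : Nonempty {vh : X2h // vh ≠ 0}
    · obtain ⟨v0⟩ := hne
      have hplus := le_ciSup hSbdd v0
      have hminus := le_ciSup hSbdd ⟨-v0.1, neg_ne_zero.mpr v0.2⟩
      have hvpos : 0 < ‖(v0.1 : X₂hat)‖ := by
        rw [norm_pos_iff]
        exact fun h => v0.2 (Subtype.coe_injective h)
      simp only [Submodule.coe_neg, map_neg, ContinuousLinearMap.neg_apply, norm_neg,
        neg_neg, sub_neg_eq_add] at hminus
      rw [← hSdef] at hplus hminus
      have hsum : (-(b₁ θ (v0.1:X₂hat)) - b (v0.1:X₂hat) p) / ‖(v0.1:X₂hat)‖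
          + (b₁ θ (v0.1:X₂hat) + b (v0.1:X₂hat) p) / ‖(v0.1:X₂hat)‖ = 0 := by
        rw [← add_div,
          show -(b₁ θ (v0.1:X₂hat)) - b (v0.1:X₂hat) p
            + (b₁ θ (v0.1:X₂hat) + b (v0.1:X₂hat) p) = 0 from by ring, zero_div]
      linarith
    · rw [not_nonempty_iff] at hne
      rw [hSdef, Real.iSup_of_isEmpty]
  have hScons : ∀ wh : X2h, -(b₁ θ (wh : X₂hat)) - b (wh : X₂hat) p ≤ S * ‖(wh : X₂hat)‖ := by
    intro wh
    by_cases hw : wh = 0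
    · simp [hw]
    · have hvpos : 0 < ‖(wh : X₂hat)‖ := by
        rw [norm_pos_iff]
        exact fun h => hw (Subtype.coe_injective h)
      have := le_ciSup hSbdd ⟨wh, hw⟩
      rw [← hSdef] at this
      rw [div_le_iff₀ hvpos] at this
      linarith [this]
  have hSconsabs : ∀ wh : X2h, |(-(b₁ θ (wh : X₂hat)) - b (wh : X₂hat) p)| ≤ S * ‖(wh : X₂hat)‖ := by
    intro wh
    rw [abs_le]
    refine ⟨?_, hScons wh⟩
    have := hScons (-wh)
    simp only [Submodule.coe_neg, map_neg, ContinuousLinearMap.neg_apply, norm_neg] at this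
    linarith
  -- the discrete operator B for b
  obtain ⟨B, hB⟩ := exists_discrete_op' b X2h Qh
  have hadj : ∀ q : Qh, C₁ * ‖q‖ ≤ ‖LinearMap.adjoint B q‖ := by
    intro q
    refine (hinfsup_b q).trans (Real.iSup_le ?_ (norm_nonneg _))
    rintro ⟨v, hv⟩
    have hvpos : 0 < ‖(v : X₂hat)‖ := by
      rw [norm_pos_iff]
      exact fun h => hv (Subtype.coe_injective h)
    rw [div_le_iff₀ hvpos]
    have h1 : b (v : X₂hat) (q : Q) = ⟪v, LinearMap.adjoint B q⟫ := by
      rw [LinearMap.adjoint_inner_right, hB]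
    rw [h1]
    calc ⟪v, LinearMap.adjoint B q⟫
        ≤ ‖v‖ * ‖LinearMap.adjoint B q‖ := real_inner_le_norm _ _
      _ = ‖LinearMap.adjoint B q‖ * ‖(v : X₂hat)‖ := by
          rw [mul_comm]; rfl
  
  have hNE : Nonempty (X1h × X2h × Qh) := ⟨(0, 0, 0)⟩
  have habs : ∀ (x y : X₁), |a x y| ≤ ‖a‖ * ‖x‖ * ‖y‖ := fun x y => by
    rw [← Real.norm_eq_abs]; exact a.le_opNorm₂ x y
  have habs₁ : ∀ (x : X₁) (y : X₂hat), |b₁ x y| ≤ ‖b₁‖ * ‖x‖ * ‖y‖ := fun x y => by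
    rw [← Real.norm_eq_abs]; exact b₁.le_opNorm₂ x y
  have habsb : ∀ (x : X₂hat) (y : Q), |b x y| ≤ ‖b‖ * ‖x‖ * ‖y‖ := fun x y => by
    rw [← Real.norm_eq_abs]; exact b.le_opNorm₂ x y
  have hmain : ∀ w : X1h × X2h × Qh,
      ‖θ - θh‖ + ‖u - uh‖ + ‖p - ph‖ ≤
        Cf * ((‖θ - (w.1 : X₁)‖ + ‖u - (w.2.1 : X₂hat)‖ + ‖p - (w.2.2 : Q)‖) + S) := by
    rintro ⟨ξh, vh, qh⟩
    have hE10 : (0:ℝ) ≤ ‖θ - (ξh : X₁)‖ := norm_nonneg _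
    have hE20 : (0:ℝ) ≤ ‖u - (vh : X₂hat)‖ := norm_nonneg _
    have hE30 : (0:ℝ) ≤ ‖p - (qh : Q)‖ := norm_nonneg _
    have hD0 : (0:ℝ) ≤ (‖θ - (ξh : X₁)‖ + ‖u - (vh : X₂hat)‖ + ‖p - (qh : Q)‖ + S) := by
      have : (0:ℝ) ≤ ‖θ - (ξh : X₁)‖ + ‖u - (vh : X₂hat)‖ + ‖p - (qh : Q)‖ := by positivity
      linarith
    set tθ : X1h := ⟨θh, hθmem⟩ - ξh with htθdef
    set du : X2h := ⟨uh, huhmem⟩ - vh with hdudef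
    set dp : Qh := ⟨ph, hpmem⟩ - qh with hdpdef
    have htθ : (tθ : X₁) = θh - (ξh : X₁) := rfl
    have hduc : (du : X₂hat) = uh - (vh : X₂hat) := rfl
    have hdpc : (dp : Q) = ph - (qh : Q) := rfl
    -- residual identities
    have hR1 : ∀ ηh : X1h, a (tθ : X₁) (ηh : X₁) + b₁ (ηh : X₁) (du : X₂hat)
        = a (θ - (ξh : X₁)) (ηh : X₁) + b₁ (ηh : X₁) (u - (vh : X₂hat)) := by
      intro ηh
      have e1 := hc1 (ηh : X₁)
      have e2 := hd1 ηh
      rw [htθ, hduc]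
      simp only [map_sub, ContinuousLinearMap.sub_apply]
      linarith
    have hR2 : ∀ wh : X2h, b₁ (tθ : X₁) (wh : X₂hat) + b (wh : X₂hat) (dp : Q)
        = (-(b₁ θ (wh : X₂hat)) - b (wh : X₂hat) p)
          + (b₁ (θ - (ξh : X₁)) (wh : X₂hat) + b (wh : X₂hat) (p - (qh : Q))) := by
      intro wh
      have e2 := hd2 wh
      rw [htθ, hdpc]
      simp only [map_sub, ContinuousLinearMap.sub_apply]
      linarith
    have hR3 : ∀ q : Qh, b (du : X₂hat) (q : Q) = b (u - (vh : X₂hat)) (q : Q) := by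
      intro q
      have e3 := hd3 q
      have e3' := hc3 (q : Q)
      rw [hduc]
      simp only [map_sub, ContinuousLinearMap.sub_apply]
      linarith
    -- the corrector zh
    have hBdu : ‖B du‖ ≤ ‖b‖ * ‖u - (vh : X₂hat)‖ := by
      rcases eq_or_lt_of_le (norm_nonneg (B du)) with h0 | h0
      · rw [← h0]; positivity
      · have hkey : ‖B du‖ ^ 2 = b (u - (vh : X₂hat)) ((B du : Qh) : Q) := by
          rw [← real_inner_self_eq_norm_sq, hB, hR3]
        have h2 := habsb (u - (vh : X₂hat)) ((B du : Qh) : Q)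
        have h3 : ‖((B du : Qh) : Q)‖ = ‖B du‖ := rfl
        rw [h3] at h2
        nlinarith [le_abs_self (b (u - (vh : X₂hat)) ((B du : Qh) : Q))]
    obtain ⟨zh, hzB, hzn⟩ := exists_preimage_of_adjoint_lower_bound' B hC₁ hadj (B du)
    have hzc : ‖zh‖ = ‖(zh : X₂hat)‖ := rfl
    rw [hzc] at hzn
    set u₀ : X2h := du - zh with hu₀def
    have hu₀c : (u₀ : X₂hat) = (du : X₂hat) - (zh : X₂hat) := rfl
    have hducomp : (du : X₂hat) = (u₀ : X₂hat) + (zh : X₂hat) := by rw [hu₀c]; abel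
    have hu₀B : ∀ q : Qh, b (u₀ : X₂hat) (q : Q) = 0 := by
      intro q
      have hBu₀ : B u₀ = 0 := by rw [hu₀def, map_sub, hzB, sub_self]
      rw [← hB, hBu₀, inner_zero_left]
    have hZ0 : (0:ℝ) ≤ ‖(zh : X₂hat)‖ := norm_nonneg _
    have hT0 : (0:ℝ) ≤ ‖(tθ : X₁)‖ := norm_nonneg _
    have hU0 : (0:ℝ) ≤ ‖(u₀ : X₂hat)‖ := norm_nonneg _
    -- basic scaled bounds
    have hE1D : ‖θ - (ξh : X₁)‖ ≤ (‖θ - (ξh : X₁)‖ + ‖u - (vh : X₂hat)‖ + ‖p - (qh : Q)‖ + S) := by linarith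
    have hE2D : ‖u - (vh : X₂hat)‖ ≤ (‖θ - (ξh : X₁)‖ + ‖u - (vh : X₂hat)‖ + ‖p - (qh : Q)‖ + S) := by linarith
    have hE3D : ‖p - (qh : Q)‖ ≤ (‖θ - (ξh : X₁)‖ + ‖u - (vh : X₂hat)‖ + ‖p - (qh : Q)‖ + S) := by linarith
    have hm1 : ‖a‖ * ‖θ - (ξh : X₁)‖ ≤ K0 * (‖θ - (ξh : X₁)‖ + ‖u - (vh : X₂hat)‖ + ‖p - (qh : Q)‖ + S) := mul_le_mul hK0a hE1D hE10 hK0pos.le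
    have hm2 : ‖b₁‖ * ‖u - (vh : X₂hat)‖ ≤ K0 * (‖θ - (ξh : X₁)‖ + ‖u - (vh : X₂hat)‖ + ‖p - (qh : Q)‖ + S) := mul_le_mul hK0b₁ hE2D hE20 hK0pos.le
    have hm3 : ‖b₁‖ * ‖θ - (ξh : X₁)‖ ≤ K0 * (‖θ - (ξh : X₁)‖ + ‖u - (vh : X₂hat)‖ + ‖p - (qh : Q)‖ + S) := mul_le_mul hK0b₁ hE1D hE10 hK0pos.le
    have hm4 : ‖b‖ * ‖p - (qh : Q)‖ ≤ K0 * (‖θ - (ξh : X₁)‖ + ‖u - (vh : X₂hat)‖ + ‖p - (qh : Q)‖ + S) := mul_le_mul hK0b hE3D hE30 hK0pos.le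
    have hm5 : ‖b‖ * ‖u - (vh : X₂hat)‖ ≤ K0 * (‖θ - (ξh : X₁)‖ + ‖u - (vh : X₂hat)‖ + ‖p - (qh : Q)‖ + S) := mul_le_mul hK0b hE2D hE20 hK0pos.le
    have hmS : S ≤ K0 * (‖θ - (ξh : X₁)‖ + ‖u - (vh : X₂hat)‖ + ‖p - (qh : Q)‖ + S) := by
      linarith [mul_le_mul_of_nonneg_right hK0one hD0]
    -- bound on zh
    have hz2 : C₁ * ‖(zh : X₂hat)‖ ≤ K0 * (‖θ - (ξh : X₁)‖ + ‖u - (vh : X₂hat)‖ + ‖p - (qh : Q)‖ + S) := by linarith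
    -- bound on u₀ via the inf-sup condition for b₁
    have hu' : C₂ * ‖(u₀ : X₂hat)‖ ≤ ‖a‖ * ‖θ - (ξh : X₁)‖ + ‖b₁‖ * ‖u - (vh : X₂hat)‖ + ‖a‖ * ‖(tθ : X₁)‖ + ‖b₁‖ * ‖(zh : X₂hat)‖ := by
      refine (hinfsup_b₁ u₀ hu₀B).trans (Real.iSup_le ?_ (by positivity))
      rintro ⟨ηh, hη⟩
      have hηpos : 0 < ‖(ηh : X₁)‖ := by
        rw [norm_pos_iff]
        exact fun h => hη (Subtype.coe_injective h)
      rw [div_le_iff₀ hηpos]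
      have hsplit : b₁ (ηh : X₁) (du : X₂hat)
          = b₁ (ηh : X₁) (u₀ : X₂hat) + b₁ (ηh : X₁) (zh : X₂hat) := by
        rw [hducomp, map_add]
      have h1 := hR1 ηh
      have hb1 := habs (θ - (ξh : X₁)) (ηh : X₁)
      have hb2 := habs₁ (ηh : X₁) (u - (vh : X₂hat))
      have hb3 := habs (tθ : X₁) (ηh : X₁)
      have hb4 := habs₁ (ηh : X₁) (zh : X₂hat)
      have l1 := le_abs_self (a (θ - (ξh : X₁)) (ηh : X₁))
      have l2 := le_abs_self (b₁ (ηh : X₁) (u - (vh : X₂hat)))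
      have l3 := neg_le_abs (a (tθ : X₁) (ηh : X₁))
      have l4 := neg_le_abs (b₁ (ηh : X₁) (zh : X₂hat))
      have hbs : |a (tθ : X₁) (ηh : X₁)| ≤ ‖a‖ * ‖(tθ : X₁)‖ * ‖(ηh : X₁)‖ := hb3
      linarith [hb1, hb2, hb4, hbs, hsplit, h1, l1, l2, l3, l4]
    -- coercivity step
    have hq' : C₃ * ‖(tθ : X₁)‖ ^ 2 ≤ ‖a‖ * ‖θ - (ξh : X₁)‖ * ‖(tθ : X₁)‖ + ‖b₁‖ * ‖(tθ : X₁)‖ * ‖u - (vh : X₂hat)‖ + S * ‖(u₀ : X₂hat)‖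
        + ‖b₁‖ * ‖θ - (ξh : X₁)‖ * ‖(u₀ : X₂hat)‖ + ‖b‖ * ‖(u₀ : X₂hat)‖ * ‖p - (qh : Q)‖ + ‖b₁‖ * ‖(tθ : X₁)‖ * ‖(zh : X₂hat)‖ := by
      have hco := (hcoer tθ).1
      have h1 := hR1 tθ
      have h2 := hR2 u₀
      have h3 := hu₀B dp
      have h4 : b₁ (tθ : X₁) (du : X₂hat)
          = b₁ (tθ : X₁) (u₀ : X₂hat) + b₁ (tθ : X₁) (zh : X₂hat) := by
        rw [hducomp, map_add]
      have fa1 := habs (θ - (ξh : X₁)) (tθ : X₁)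
      have fa2 := habs₁ (tθ : X₁) (u - (vh : X₂hat))
      have fb1 := habs₁ (θ - (ξh : X₁)) (u₀ : X₂hat)
      have fb2 := habsb (u₀ : X₂hat) (p - (qh : Q))
      have fz := habs₁ (tθ : X₁) (zh : X₂hat)
      have fs := hSconsabs u₀
      have l1 := le_abs_self (a (θ - (ξh : X₁)) (tθ : X₁))
      have l2 := le_abs_self (b₁ (tθ : X₁) (u - (vh : X₂hat)))
      have l3 := neg_le_abs (b₁ (θ - (ξh : X₁)) (u₀ : X₂hat))
      have l4 := neg_le_abs (b (u₀ : X₂hat) (p - (qh : Q)))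
      have l5 := neg_le_abs (b₁ (tθ : X₁) (zh : X₂hat))
      have l6 := neg_le_abs (-(b₁ θ (u₀ : X₂hat)) - b (u₀ : X₂hat) p)
      linarith
    -- convert to K0 * D form
    have hu2 : C₂ * ‖(u₀ : X₂hat)‖ ≤ 2 * (K0 * (‖θ - (ξh : X₁)‖ + ‖u - (vh : X₂hat)‖ + ‖p - (qh : Q)‖ + S)) + K0 * ‖(tθ : X₁)‖ + K0 * ‖(zh : X₂hat)‖ := by
      have g1 : ‖a‖ * ‖(tθ : X₁)‖ ≤ K0 * ‖(tθ : X₁)‖ := mul_le_mul_of_nonneg_right hK0a hT0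
      have g2 : ‖b₁‖ * ‖(zh : X₂hat)‖ ≤ K0 * ‖(zh : X₂hat)‖ := mul_le_mul_of_nonneg_right hK0b₁ hZ0
      linarith
    have hq2 : C₃ * ‖(tθ : X₁)‖ ^ 2 ≤ 2 * ((K0 * (‖θ - (ξh : X₁)‖ + ‖u - (vh : X₂hat)‖ + ‖p - (qh : Q)‖ + S)) * ‖(tθ : X₁)‖) + 3 * ((K0 * (‖θ - (ξh : X₁)‖ + ‖u - (vh : X₂hat)‖ + ‖p - (qh : Q)‖ + S)) * ‖(u₀ : X₂hat)‖)
        + K0 * ‖(tθ : X₁)‖ * ‖(zh : X₂hat)‖ := by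
      have g1 : ‖a‖ * ‖θ - (ξh : X₁)‖ * ‖(tθ : X₁)‖ ≤ (K0 * (‖θ - (ξh : X₁)‖ + ‖u - (vh : X₂hat)‖ + ‖p - (qh : Q)‖ + S)) * ‖(tθ : X₁)‖ :=
        mul_le_mul_of_nonneg_right hm1 hT0
      have g2 : ‖b₁‖ * ‖(tθ : X₁)‖ * ‖u - (vh : X₂hat)‖ ≤ (K0 * (‖θ - (ξh : X₁)‖ + ‖u - (vh : X₂hat)‖ + ‖p - (qh : Q)‖ + S)) * ‖(tθ : X₁)‖ := by
        have := mul_le_mul_of_nonneg_right hm2 hT0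
        linarith
      have g3 : S * ‖(u₀ : X₂hat)‖ ≤ (K0 * (‖θ - (ξh : X₁)‖ + ‖u - (vh : X₂hat)‖ + ‖p - (qh : Q)‖ + S)) * ‖(u₀ : X₂hat)‖ := mul_le_mul_of_nonneg_right hmS hU0
      have g4 : ‖b₁‖ * ‖θ - (ξh : X₁)‖ * ‖(u₀ : X₂hat)‖ ≤ (K0 * (‖θ - (ξh : X₁)‖ + ‖u - (vh : X₂hat)‖ + ‖p - (qh : Q)‖ + S)) * ‖(u₀ : X₂hat)‖ :=
        mul_le_mul_of_nonneg_right hm3 hU0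
      have g5 : ‖b‖ * ‖(u₀ : X₂hat)‖ * ‖p - (qh : Q)‖ ≤ (K0 * (‖θ - (ξh : X₁)‖ + ‖u - (vh : X₂hat)‖ + ‖p - (qh : Q)‖ + S)) * ‖(u₀ : X₂hat)‖ := by
        have := mul_le_mul_of_nonneg_right hm4 hU0
        linarith
      have g6 : ‖b₁‖ * ‖(tθ : X₁)‖ * ‖(zh : X₂hat)‖ ≤ K0 * ‖(tθ : X₁)‖ * ‖(zh : X₂hat)‖ := by
        have := mul_le_mul_of_nonneg_right hK0b₁ (mul_nonneg hT0 hZ0)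
        linarith
      linarith
    -- resolve the quadratic inequality
    have hu3 : C₁ * (C₂ * ‖(u₀ : X₂hat)‖) ≤ (2 * C₁ * K0 + K0 ^ 2) * (‖θ - (ξh : X₁)‖ + ‖u - (vh : X₂hat)‖ + ‖p - (qh : Q)‖ + S) + C₁ * K0 * ‖(tθ : X₁)‖ := by
      have p1 := mul_le_mul_of_nonneg_left hu2 hC₁.le
      have p2 := mul_le_mul_of_nonneg_left hz2 hK0pos.le
      linarith
    have hq3 : C₁ * C₂ * C₃ * ‖(tθ : X₁)‖ ^ 2 ≤ P * ((‖θ - (ξh : X₁)‖ + ‖u - (vh : X₂hat)‖ + ‖p - (qh : Q)‖ + S) * ‖(tθ : X₁)‖) + P2 * ((‖θ - (ξh : X₁)‖ + ‖u - (vh : X₂hat)‖ + ‖p - (qh : Q)‖ + S) * (‖θ - (ξh : X₁)‖ + ‖u - (vh : X₂hat)‖ + ‖p - (qh : Q)‖ + S)) := by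
      have p1 := mul_le_mul_of_nonneg_left hq2 (mul_nonneg hC₁.le hC₂.le)
      have p2 := mul_le_mul_of_nonneg_left hu3
        (by positivity : (0:ℝ) ≤ 3 * (K0 * (‖θ - (ξh : X₁)‖ + ‖u - (vh : X₂hat)‖ + ‖p - (qh : Q)‖ + S)))
      have p3 := mul_le_mul_of_nonneg_left hz2
        (by positivity : (0:ℝ) ≤ C₂ * (K0 * ‖(tθ : X₁)‖))
      rw [hPdef, hP2def]
      linarith [p1, p2, p3]
    have hT : ‖(tθ : X₁)‖ ≤ Kt * (‖θ - (ξh : X₁)‖ + ‖u - (vh : X₂hat)‖ + ‖p - (qh : Q)‖ + S) := by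
      rcases le_or_gt (‖(tθ : X₁)‖) ((‖θ - (ξh : X₁)‖ + ‖u - (vh : X₂hat)‖ + ‖p - (qh : Q)‖ + S)) with hle | hlt
      · have : 1 * (‖θ - (ξh : X₁)‖ + ‖u - (vh : X₂hat)‖ + ‖p - (qh : Q)‖ + S) ≤ Kt * (‖θ - (ξh : X₁)‖ + ‖u - (vh : X₂hat)‖ + ‖p - (qh : Q)‖ + S) := mul_le_mul_of_nonneg_right hKt1 hD0
        linarith
      · have hTpos : (0:ℝ) < ‖(tθ : X₁)‖ := lt_of_le_of_lt hD0 hlt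
        have h2 : C₁ * C₂ * C₃ * ‖(tθ : X₁)‖ * ‖(tθ : X₁)‖ ≤ ((P + P2) * (‖θ - (ξh : X₁)‖ + ‖u - (vh : X₂hat)‖ + ‖p - (qh : Q)‖ + S)) * ‖(tθ : X₁)‖ := by
          have g : P2 * ((‖θ - (ξh : X₁)‖ + ‖u - (vh : X₂hat)‖ + ‖p - (qh : Q)‖ + S) * (‖θ - (ξh : X₁)‖ + ‖u - (vh : X₂hat)‖ + ‖p - (qh : Q)‖ + S)) ≤ P2 * ((‖θ - (ξh : X₁)‖ + ‖u - (vh : X₂hat)‖ + ‖p - (qh : Q)‖ + S) * ‖(tθ : X₁)‖) := by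
            have := mul_le_mul_of_nonneg_left hlt.le (mul_nonneg hP2pos.le hD0)
            linarith
          linarith [hq3, g]
        have h3 : C₁ * C₂ * C₃ * ‖(tθ : X₁)‖ ≤ (P + P2) * (‖θ - (ξh : X₁)‖ + ‖u - (vh : X₂hat)‖ + ‖p - (qh : Q)‖ + S) :=
          le_of_mul_le_mul_right h2 hTpos
        have h4 : ‖(tθ : X₁)‖ ≤ (P + P2) / (C₁ * C₂ * C₃) * (‖θ - (ξh : X₁)‖ + ‖u - (vh : X₂hat)‖ + ‖p - (qh : Q)‖ + S) := by
          rw [div_mul_eq_mul_div, le_div_iff₀ (by positivity)]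
          linarith [h3]
        have h5 : (P + P2) / (C₁ * C₂ * C₃) * (‖θ - (ξh : X₁)‖ + ‖u - (vh : X₂hat)‖ + ‖p - (qh : Q)‖ + S) ≤ Kt * (‖θ - (ξh : X₁)‖ + ‖u - (vh : X₂hat)‖ + ‖p - (qh : Q)‖ + S) :=
          mul_le_mul_of_nonneg_right (le_max_right _ _) hD0
        linarith
    have hZ : ‖(zh : X₂hat)‖ ≤ Kz * (‖θ - (ξh : X₁)‖ + ‖u - (vh : X₂hat)‖ + ‖p - (qh : Q)‖ + S) := by
      rw [hKzdef, div_mul_eq_mul_div, le_div_iff₀ hC₁]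
      linarith [hz2]
    have hU : ‖(u₀ : X₂hat)‖ ≤ Ku * (‖θ - (ξh : X₁)‖ + ‖u - (vh : X₂hat)‖ + ‖p - (qh : Q)‖ + S) := by
      rw [hKudef, div_mul_eq_mul_div, le_div_iff₀ hC₂]
      have g1 : K0 * ‖(tθ : X₁)‖ ≤ K0 * (Kt * (‖θ - (ξh : X₁)‖ + ‖u - (vh : X₂hat)‖ + ‖p - (qh : Q)‖ + S)) := mul_le_mul_of_nonneg_left hT hK0pos.le
      have g2 : K0 * ‖(zh : X₂hat)‖ ≤ K0 * (Kz * (‖θ - (ξh : X₁)‖ + ‖u - (vh : X₂hat)‖ + ‖p - (qh : Q)‖ + S)) := mul_le_mul_of_nonneg_left hZ hK0pos.le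
      linarith [hu2, g1, g2]
    -- bound on dp via the inf-sup condition for b
    have hp' : C₁ * ‖(dp : Q)‖ ≤ S + ‖b₁‖ * ‖θ - (ξh : X₁)‖ + ‖b‖ * ‖p - (qh : Q)‖ + ‖b₁‖ * ‖(tθ : X₁)‖ := by
      refine (hinfsup_b dp).trans (Real.iSup_le ?_ ?_)
      · rintro ⟨wh, hw⟩
        have hwpos : 0 < ‖(wh : X₂hat)‖ := by
          rw [norm_pos_iff]
          exact fun h => hw (Subtype.coe_injective h)
        rw [div_le_iff₀ hwpos]
        have h2 := hR2 wh
        have fs := hScons wh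
        have fb1 := habs₁ (θ - (ξh : X₁)) (wh : X₂hat)
        have fb2 := habsb (wh : X₂hat) (p - (qh : Q))
        have ft := habs₁ (tθ : X₁) (wh : X₂hat)
        have l1 := le_abs_self (b₁ (θ - (ξh : X₁)) (wh : X₂hat))
        have l2 := le_abs_self (b (wh : X₂hat) (p - (qh : Q)))
        have l3 := neg_le_abs (b₁ (tθ : X₁) (wh : X₂hat))
        linarith [h2, fs, fb1, fb2, ft, l1, l2, l3]
      · have g1 : (0:ℝ) ≤ ‖b₁‖ * ‖θ - (ξh : X₁)‖ := by positivity
        have g2 : (0:ℝ) ≤ ‖b‖ * ‖p - (qh : Q)‖ := by positivity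
        have g3 : (0:ℝ) ≤ ‖b₁‖ * ‖(tθ : X₁)‖ := by positivity
        linarith
    have hPdp : ‖(dp : Q)‖ ≤ Kp * (‖θ - (ξh : X₁)‖ + ‖u - (vh : X₂hat)‖ + ‖p - (qh : Q)‖ + S) := by
      rw [hKpdef, div_mul_eq_mul_div, le_div_iff₀ hC₁]
      have g1 : ‖b₁‖ * ‖(tθ : X₁)‖ ≤ K0 * (Kt * (‖θ - (ξh : X₁)‖ + ‖u - (vh : X₂hat)‖ + ‖p - (qh : Q)‖ + S)) := by
        have i1 := mul_le_mul_of_nonneg_right hK0b₁ hT0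
        have i2 := mul_le_mul_of_nonneg_left hT hK0pos.le
        linarith
      linarith [hp', hmS, hm3, hm4, g1]
    -- triangle inequalities
    have hθf : ‖θ - θh‖ ≤ ‖θ - (ξh : X₁)‖ + ‖(tθ : X₁)‖ := by
      have he : θ - θh = (θ - (ξh : X₁)) - (tθ : X₁) := by rw [htθ]; abel
      rw [he]
      exact norm_sub_le _ _
    have huf : ‖u - uh‖ ≤ ‖u - (vh : X₂hat)‖ + ‖(u₀ : X₂hat)‖ + ‖(zh : X₂hat)‖ := by
      have he : u - uh = ((u - (vh : X₂hat)) - (u₀ : X₂hat)) - (zh : X₂hat) := by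
        rw [hu₀c, hduc]; abel
      rw [he]
      calc ‖((u - (vh : X₂hat)) - (u₀ : X₂hat)) - (zh : X₂hat)‖
          ≤ ‖(u - (vh : X₂hat)) - (u₀ : X₂hat)‖ + ‖(zh : X₂hat)‖ := norm_sub_le _ _
        _ ≤ ‖u - (vh : X₂hat)‖ + ‖(u₀ : X₂hat)‖ + ‖(zh : X₂hat)‖ := by
            have := norm_sub_le (u - (vh : X₂hat)) (u₀ : X₂hat)
            linarith
    have hpf : ‖p - ph‖ ≤ ‖p - (qh : Q)‖ + ‖(dp : Q)‖ := by
      have he : p - ph = (p - (qh : Q)) - (dp : Q) := by rw [hdpc]; abel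
      rw [he]
      exact norm_sub_le _ _
    -- put everything together
    have hexp : Cf * ((‖θ - (ξh : X₁)‖ + ‖u - (vh : X₂hat)‖ + ‖p - (qh : Q)‖) + S)
        = (‖θ - (ξh : X₁)‖ + ‖u - (vh : X₂hat)‖ + ‖p - (qh : Q)‖ + S) + Kt * (‖θ - (ξh : X₁)‖ + ‖u - (vh : X₂hat)‖ + ‖p - (qh : Q)‖ + S) + Ku * (‖θ - (ξh : X₁)‖ + ‖u - (vh : X₂hat)‖ + ‖p - (qh : Q)‖ + S) + Kz * (‖θ - (ξh : X₁)‖ + ‖u - (vh : X₂hat)‖ + ‖p - (qh : Q)‖ + S) + Kp * (‖θ - (ξh : X₁)‖ + ‖u - (vh : X₂hat)‖ + ‖p - (qh : Q)‖ + S) := by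
      rw [hCfdef]; ring
    linarith
  -- conclude via the infimum
  set I : ℝ := ⨅ w : X1h × X2h × Qh,
      (‖θ - (w.1 : X₁)‖ + ‖u - (w.2.1 : X₂hat)‖ + ‖p - (w.2.2 : Q)‖) with hIdef
  have hIle : ((‖θ - θh‖ + ‖u - uh‖ + ‖p - ph‖) - Cf * S) / Cf ≤ I := by
    refine le_ciInf fun w => ?_
    rw [div_le_iff₀ hCf]
    have := hmain w
    linarith
  have h2 := mul_le_mul_of_nonneg_right hIle hCf.le
  rw [div_mul_cancel₀ _ (ne_of_gt hCf)] at h2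
  linarith
end

section
/- Let X₂ ⊆ X̂₂ be a closed subspace and suppose (θ, u, p) ∈ X₁ × X₂ × Q satisfies a(θ, ξ) + b₁(ξ, u) = 0 for all ξ ∈ X₁, b₁(θ, v) + b(v, p) = 0 for all v ∈ X₂, and b(u, q) = F(q) for all q ∈ Q, where F is a continuous linear functional on Q. Let X_{1,h} ⊆ X₁, Q_h ⊆ Q be finite-dimensional subspaces, and let X_{2,h} ⊆ X₂ be a finite-dimensional subspace of the continuum test space (the conforming case). Let (θ_h, u_h, p_h) ∈ X_{1,h} × X_{2,h} × Q_h satisfy a(θ_h, ξ_h) + b₁(ξ_h, u_h) = 0 for all ξ_h ∈ X_{1,h}, b₁(θ_h, v_h) + b(v_h, p_h) = 0 for all v_h ∈ X_{2,h}, and b(u_h, q_h) = F(q_h) for all q_h ∈ Q_h. Assume the discrete conditions: (1) there is C₁ > 0 with sup over v_h ∈ X_{2,h} \ {0} of b(v_h, q_h)/‖v_h‖ ≥ C₁ ‖q_h‖ for all q_h ∈ Q_h; (2) with ker B_h := {v_h ∈ X_{2,h} : b(v_h, q_h) = 0 for all q_h ∈ Q_h}, there is C₂ > 0 with sup over ξ_h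 ∈ X_{1,h} \ {0} of b₁(ξ_h, v_h)/‖ξ_h‖ ≥ C₂ ‖v_h‖ for all v_h ∈ ker B_h; (3) there are C₃, C₄ > 0 with C₃ ‖ξ_h‖² ≤ a(ξ_h, ξ_h) ≤ C₄ ‖ξ_h‖² for all ξ_h ∈ X_{1,h}. Then there exists a constant C > 0, depending only on the norms of b₁ and b and on C₁, C₂, C₃, C₄, such that ‖θ − θ_h‖_{X₁} + ‖u − u_h‖_{X̂₂} + ‖p − p_h‖_Q ≤ C inf over (ξ_h, v_h, q_h) ∈ X_{1,h} × X_{2,h} × Q_h of (‖θ − ξ_h‖_{X₁} + ‖u − v_h‖_{X̂₂} + ‖p − q_h‖_Q); in particular, the consistency term sup over v_h ∈ X_{2,h} \ {0} of (−b₁(θ, v_h) − b(v_h, p))/‖v_h‖ vanishes. -/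
set_option maxHeartbeats 1000000000
set_option synthInstance.maxHeartbeats 400000

lemma real_iSup_zero {ι : Sort*} (f : ι → ℝ) (h : ∀ i, f i = 0) : (⨆ i, f i) = 0 := by
  rw [show f = fun _ => (0:ℝ) from funext h]
  exact Real.iSup_const_zero


/-- **Céa-type quasi-optimality estimate for the conforming expanded mixed method.**
When the discrete velocity space `X2h` is contained in the continuum test
space `X₂` (conforming case), the error of the discrete solution is bounded by
a constant times the best-approximation error alone; in particular the
consistency term vanishes. -/
theorem cea_estimate_conforming_expanded_mixed
    {X₁ X₂hat Q : Type*}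
    [NormedAddCommGroup X₁] [InnerProductSpace ℝ X₁] [CompleteSpace X₁]
    [NormedAddCommGroup X₂hat] [InnerProductSpace ℝ X₂hat] [CompleteSpace X₂hat]
    [NormedAddCommGroup Q] [InnerProductSpace ℝ Q] [CompleteSpace Q]
    (a : X₁ →L[ℝ] X₁ →L[ℝ] ℝ)
    (b₁ : X₁ →L[ℝ] X₂hat →L[ℝ] ℝ)
    (b : X₂hat →L[ℝ] Q →L[ℝ] ℝ)
    (X₂ : Submodule ℝ X₂hat) (hX₂closed : IsClosed (X₂ : Set X₂hat))
    (X1h : Submodule ℝ X₁) (X2h : Submodule ℝ X₂hat) (Qh : Submodule ℝ Q)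
    [FiniteDimensional ℝ X1h] [FiniteDimensional ℝ X2h] [FiniteDimensional ℝ Qh]
    -- conforming case: the discrete velocity space lies in the continuum one
    (hconf : X2h ≤ X₂)
    (C₁ C₂ C₃ C₄ : ℝ) (hC₁ : 0 < C₁) (hC₂ : 0 < C₂) (hC₃ : 0 < C₃) (hC₄ : 0 < C₄)
    -- (1) discrete inf-sup condition for b
    (hinfsup_b : ∀ qh : Qh,
      C₁ * ‖(qh : Q)‖ ≤
        ⨆ vh : {vh : X2h // vh ≠ 0}, b (vh.1 : X₂hat) (qh : Q) / ‖(vh.1 : X₂hat)‖)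
    -- (2) discrete inf-sup condition for b₁ on ker Bh
    (hinfsup_b₁ : ∀ vh : X2h, (∀ qh : Qh, b (vh : X₂hat) (qh : Q) = 0) →
      C₂ * ‖(vh : X₂hat)‖ ≤
        ⨆ ξh : {ξh : X1h // ξh ≠ 0}, b₁ (ξh.1 : X₁) (vh : X₂hat) / ‖(ξh.1 : X₁)‖)
    -- (3) coercivity and boundedness of a on X1h
    (hcoer : ∀ ξh : X1h,
      C₃ * ‖(ξh : X₁)‖ ^ 2 ≤ a (ξh : X₁) (ξh : X₁) ∧
      a (ξh : X₁) (ξh : X₁) ≤ C₄ * ‖(ξh : X₁)‖ ^ 2) :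
    ∃ C > 0, ∀ (F : Q →L[ℝ] ℝ)
      (θ : X₁) (u : X₂hat) (p : Q) (θh : X₁) (uh : X₂hat) (ph : Q),
      -- the continuum solution
      u ∈ X₂ →
      (∀ ξ : X₁, a θ ξ + b₁ ξ u = 0) →
      (∀ v : X₂hat, v ∈ X₂ → b₁ θ v + b v p = 0) →
      (∀ q : Q, b u q = F q) →
      -- the discrete solution
      θh ∈ X1h → uh ∈ X2h → ph ∈ Qh →
      (∀ ξh : X1h, a θh (ξh : X₁) + b₁ (ξh : X₁) uh = 0) →
      (∀ vh : X2h, b₁ θh (vh : X₂hat) + b (vh : X₂hat) ph = 0) →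
      (∀ qh : Qh, b uh (qh : Q) = F (qh : Q)) →
      (‖θ - θh‖ + ‖u - uh‖ + ‖p - ph‖ ≤
        C * ⨅ w : X1h × X2h × Qh,
              (‖θ - (w.1 : X₁)‖ + ‖u - (w.2.1 : X₂hat)‖ + ‖p - (w.2.2 : Q)‖)) ∧
      (⨆ vh : {vh : X2h // vh ≠ 0},
          (-(b₁ θ (vh.1 : X₂hat)) - b (vh.1 : X₂hat) p) / ‖(vh.1 : X₂hat)‖) = 0 := by
    classical
  -- the discrete "stiffness" operator into the product of duals
  let S : (X1h × X2h × Qh) →ₗ[ℝ] ((X1h →L[ℝ] ℝ) × (X2h →L[ℝ] ℝ) × (Qh →L[ℝ] ℝ)) :=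
    { toFun := fun x =>
        ( (a (x.1 : X₁) + b₁.flip (x.2.1 : X₂hat)).comp X1h.subtypeL,
          (b₁ (x.1 : X₁) + b.flip (x.2.2 : Q)).comp X2h.subtypeL,
          (b (x.2.1 : X₂hat)).comp Qh.subtypeL ),
      map_add' := by
        intro x y
        refine Prod.ext ?_ (Prod.ext ?_ ?_) <;> ext ζ <;>
          simp [ContinuousLinearMap.flip_apply] <;> ring
      map_smul' := by
        intro c x
        refine Prod.ext ?_ (Prod.ext ?_ ?_) <;> ext ζ <;>
          simp [ContinuousLinearMap.flip_apply] <;> ring }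
  have Sapp1 : ∀ (x : X1h × X2h × Qh) (ζ : X1h),
      (S x).1 ζ = a (x.1 : X₁) (ζ : X₁) + b₁ (ζ : X₁) (x.2.1 : X₂hat) := fun _ _ => rfl
  have Sapp2 : ∀ (x : X1h × X2h × Qh) (v : X2h),
      (S x).2.1 v = b₁ (x.1 : X₁) (v : X₂hat) + b (v : X₂hat) (x.2.2 : Q) := fun _ _ => rfl
  have Sapp3 : ∀ (x : X1h × X2h × Qh) (q : Qh),
      (S x).2.2 q = b (x.2.1 : X₂hat) (q : Q) := fun _ _ => rfl
  -- injectivity of S from the discrete conditions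
  have hker : LinearMap.ker S = ⊥ := by
    rw [LinearMap.ker_eq_bot']
    rintro ⟨th, uhh, phh⟩ hx
    have h1 : ∀ ζ : X1h, a (th : X₁) (ζ : X₁) + b₁ (ζ : X₁) (uhh : X₂hat) = 0 := by
      intro ζ
      have := congrArg Prod.fst hx
      have := ContinuousLinearMap.ext_iff.mp this ζ
      simpa [Sapp1 (th, uhh, phh) ζ] using this
    have h2 : ∀ v : X2h, b₁ (th : X₁) (v : X₂hat) + b (v : X₂hat) (phh : Q) = 0 := by
      intro v
      have := congrArg (fun z => z.2.1) hx
      have := ContinuousLinearMap.ext_iff.mp this v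
      simpa [Sapp2 (th, uhh, phh) v] using this
    have h3 : ∀ q : Qh, b (uhh : X₂hat) (q : Q) = 0 := by
      intro q
      have := congrArg (fun z => z.2.2) hx
      have := ContinuousLinearMap.ext_iff.mp this q
      simpa [Sapp3 (th, uhh, phh) q] using this
    -- θ-component vanishes
    have hbthu : b₁ (th : X₁) (uhh : X₂hat) = 0 := by
      have := h2 uhh
      have h3u := h3 phh
      linarith
    have hath : a (th : X₁) (th : X₁) = 0 := by
      have := h1 th
      linarith
    have hthn : ‖(th : X₁)‖ = 0 := by
      have hc := (hcoer th).1
      have hn : (0:ℝ) ≤ ‖(th : X₁)‖ := norm_nonneg _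
      have hsq : ‖(th : X₁)‖ ^ 2 ≤ 0 := by nlinarith
      exact le_antisymm (by nlinarith) hn
    have hth0 : th = 0 := by
      have : (th : X₁) = 0 := norm_eq_zero.mp hthn
      exact Subtype.ext this
    -- p-component vanishes
    have hbph : ∀ v : X2h, b (v : X₂hat) (phh : Q) = 0 := by
      intro v
      have := h2 v
      rw [hth0] at this
      simpa using this
    have hph0 : phh = 0 := by
      have hs : (⨆ vh : {vh : X2h // vh ≠ 0},
          b (vh.1 : X₂hat) (phh : Q) / ‖(vh.1 : X₂hat)‖) = 0 :=
        real_iSup_zero _ (fun vh => by rw [hbph vh.1, zero_div])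
      have := hinfsup_b phh
      rw [hs] at this
      have : ‖(phh : Q)‖ = 0 := le_antisymm (by nlinarith) (norm_nonneg _)
      exact Subtype.ext (norm_eq_zero.mp this)
    -- u-component vanishes
    have hbu : ∀ ζ : X1h, b₁ (ζ : X₁) (uhh : X₂hat) = 0 := by
      intro ζ
      have := h1 ζ
      rw [hth0] at this
      simpa using this
    have huh0 : uhh = 0 := by
      have hs : (⨆ ξh : {ξh : X1h // ξh ≠ 0},
          b₁ (ξh.1 : X₁) (uhh : X₂hat) / ‖(ξh.1 : X₁)‖) = 0 :=
        real_iSup_zero _ (fun ξh => by rw [hbu ξh.1, zero_div])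
      have := hinfsup_b₁ uhh h3
      rw [hs] at this
      have : ‖(uhh : X₂hat)‖ = 0 := le_antisymm (by nlinarith) (norm_nonneg _)
      exact Subtype.ext (norm_eq_zero.mp this)
    simp [hth0, hph0, huh0]
  obtain ⟨K, hKpos, hK⟩ := LinearMap.exists_antilipschitzWith (𝕜 := ℝ)
    (E := X1h × X2h × Qh)
    (F := (X1h →L[ℝ] ℝ) × (X2h →L[ℝ] ℝ) × (Qh →L[ℝ] ℝ)) S hker
  have hbound : ∀ x : X1h × X2h × Qh, ‖x‖ ≤ (K:ℝ) * ‖S x‖ := by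
    intro x
    have h1 := hK.le_mul_dist x 0
    have h2 : dist x (0 : X1h × X2h × Qh) = ‖x‖ := dist_zero_right x
    have h3 : dist (S x) (S 0) = ‖S x‖ := by rw [map_zero]; exact dist_zero_right (S x)
    rw [h2, h3] at h1
    exact h1
  clear_value S
  set M : ℝ := ‖a‖ + ‖b₁‖ + ‖b‖ with hM
  have hM0 : 0 ≤ M := by positivity
  have hK0 : (0:ℝ) ≤ K := K.coe_nonneg
  have hKM0 : (0:ℝ) ≤ (K:ℝ) * M := mul_nonneg hK0 hM0
  refine ⟨3 * (1 + (K:ℝ) * M), by linarith, ?_⟩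
  intro F θ u p θh uh ph huX₂ hc1 hc2 hc3 hθm hum hpm hd1 hd2 hd3
  constructor
  · -- the Céa estimate
    set θh' : X1h := ⟨θh, hθm⟩ with hθ'
    set uh' : X2h := ⟨uh, hum⟩ with hu'
    set ph' : Qh := ⟨ph, hpm⟩ with hp'
    have key : ∀ w : X1h × X2h × Qh,
        ‖θ - θh‖ + ‖u - uh‖ + ‖p - ph‖ ≤
          3 * (1 + (K:ℝ) * M) *
            (‖θ - (w.1 : X₁)‖ + ‖u - (w.2.1 : X₂hat)‖ + ‖p - (w.2.2 : Q)‖) := by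
      rintro ⟨ξh, vh, qh⟩
      set E : ℝ := ‖θ - (ξh : X₁)‖ + ‖u - (vh : X₂hat)‖ + ‖p - (qh : Q)‖ with hE
      have hE0 : 0 ≤ E := by positivity
      set ed : X1h × X2h × Qh := (θh' - ξh, uh' - vh, ph' - qh) with hed
      -- bound each component of S ed
      have hSed : ‖S ed‖ ≤ M * E := by
        have hME : 0 ≤ M * E := mul_nonneg hM0 hE0
        have hc1' : ∀ ζ : X1h, (S ed).1 ζ = a (θ - (ξh : X₁)) (ζ : X₁)
            + b₁ (ζ : X₁) (u - (vh : X₂hat)) := by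
          intro ζ
          have e1 := hd1 ζ
          have e2 := hc1 (ζ : X₁)
          rw [Sapp1]
          simp only [hed, hθ', hu', hp', Submodule.coe_sub, map_sub,
            ContinuousLinearMap.sub_apply]
          linarith
        have hc2' : ∀ v : X2h, (S ed).2.1 v = b₁ (θ - (ξh : X₁)) (v : X₂hat)
            + b (v : X₂hat) (p - (qh : Q)) := by
          intro v
          have e1 := hd2 v
          have e2 := hc2 (v : X₂hat) (hconf v.2)
          rw [Sapp2]
          simp only [hed, hθ', hu', hp', Submodule.coe_sub, map_sub,
            ContinuousLinearMap.sub_apply]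
          linarith
        have hc3' : ∀ q : Qh, (S ed).2.2 q = b (u - (vh : X₂hat)) (q : Q) := by
          intro q
          have e1 := hd3 q
          have e2 := hc3 (q : Q)
          rw [Sapp3]
          simp only [hed, hθ', hu', hp', Submodule.coe_sub, map_sub,
            ContinuousLinearMap.sub_apply]
          linarith
        have hb1 : ‖(S ed).1‖ ≤ M * E := by
          refine ContinuousLinearMap.opNorm_le_bound _ hME (fun ζ => ?_)
          rw [hc1' ζ]
          have i1 : ‖a (θ - (ξh : X₁)) (ζ : X₁)‖ ≤ ‖a‖ * ‖θ - (ξh : X₁)‖ * ‖(ζ : X₁)‖ :=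
            a.le_opNorm₂ _ _
          have i2 : ‖b₁ (ζ : X₁) (u - (vh : X₂hat))‖ ≤ ‖b₁‖ * ‖(ζ : X₁)‖ * ‖u - (vh : X₂hat)‖ :=
            b₁.le_opNorm₂ _ _
          have hζ : ‖ζ‖ = ‖(ζ : X₁)‖ := rfl
          rw [hζ]
          calc ‖a (θ - (ξh : X₁)) (ζ : X₁) + b₁ (ζ : X₁) (u - (vh : X₂hat))‖
              ≤ ‖a (θ - (ξh : X₁)) (ζ : X₁)‖ + ‖b₁ (ζ : X₁) (u - (vh : X₂hat))‖ :=
                norm_add_le _ _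
            _ ≤ M * E * ‖(ζ : X₁)‖ := by
                have n1 : (0:ℝ) ≤ ‖(ζ : X₁)‖ := norm_nonneg _
                have n2 : (0:ℝ) ≤ ‖a‖ := a.opNorm_nonneg
                have n3 : (0:ℝ) ≤ ‖b₁‖ := b₁.opNorm_nonneg
                have n4 : (0:ℝ) ≤ ‖b‖ := b.opNorm_nonneg
                have n5 : (0:ℝ) ≤ ‖θ - (ξh : X₁)‖ := norm_nonneg _
                have n6 : (0:ℝ) ≤ ‖u - (vh : X₂hat)‖ := norm_nonneg _
                have n7 : (0:ℝ) ≤ ‖p - (qh : Q)‖ := norm_nonneg _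
                have hkey : ‖a‖ * ‖θ - (ξh : X₁)‖ + ‖b₁‖ * ‖u - (vh : X₂hat)‖ ≤ M * E := by
                  rw [hM, hE]
                  nlinarith [mul_nonneg n2 n6, mul_nonneg n2 n7, mul_nonneg n3 n5,
                    mul_nonneg n3 n7, mul_nonneg n4 n5, mul_nonneg n4 n6, mul_nonneg n4 n7]
                nlinarith [mul_le_mul_of_nonneg_right hkey n1, i1, i2]
        have hb2 : ‖(S ed).2.1‖ ≤ M * E := by
          refine ContinuousLinearMap.opNorm_le_bound _ hME (fun v => ?_)
          rw [hc2' v]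
          have i1 : ‖b₁ (θ - (ξh : X₁)) (v : X₂hat)‖ ≤ ‖b₁‖ * ‖θ - (ξh : X₁)‖ * ‖(v : X₂hat)‖ :=
            b₁.le_opNorm₂ _ _
          have i2 : ‖b (v : X₂hat) (p - (qh : Q))‖ ≤ ‖b‖ * ‖(v : X₂hat)‖ * ‖p - (qh : Q)‖ :=
            b.le_opNorm₂ _ _
          have hv : ‖v‖ = ‖(v : X₂hat)‖ := rfl
          rw [hv]
          calc ‖b₁ (θ - (ξh : X₁)) (v : X₂hat) + b (v : X₂hat) (p - (qh : Q))‖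
              ≤ ‖b₁ (θ - (ξh : X₁)) (v : X₂hat)‖ + ‖b (v : X₂hat) (p - (qh : Q))‖ :=
                norm_add_le _ _
            _ ≤ M * E * ‖(v : X₂hat)‖ := by
                have n1 : (0:ℝ) ≤ ‖(v : X₂hat)‖ := norm_nonneg _
                have n2 : (0:ℝ) ≤ ‖a‖ := a.opNorm_nonneg
                have n3 : (0:ℝ) ≤ ‖b₁‖ := b₁.opNorm_nonneg
                have n4 : (0:ℝ) ≤ ‖b‖ := b.opNorm_nonneg
                have n5 : (0:ℝ) ≤ ‖θ - (ξh : X₁)‖ := norm_nonneg _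
                have n6 : (0:ℝ) ≤ ‖u - (vh : X₂hat)‖ := norm_nonneg _
                have n7 : (0:ℝ) ≤ ‖p - (qh : Q)‖ := norm_nonneg _
                have hkey : ‖b₁‖ * ‖θ - (ξh : X₁)‖ + ‖b‖ * ‖p - (qh : Q)‖ ≤ M * E := by
                  rw [hM, hE]
                  nlinarith [mul_nonneg n2 n5, mul_nonneg n2 n6, mul_nonneg n2 n7,
                    mul_nonneg n3 n6, mul_nonneg n3 n7, mul_nonneg n4 n5, mul_nonneg n4 n6]
                nlinarith [mul_le_mul_of_nonneg_right hkey n1, i1, i2]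
        have hb3 : ‖(S ed).2.2‖ ≤ M * E := by
          refine ContinuousLinearMap.opNorm_le_bound _ hME (fun q => ?_)
          rw [hc3' q]
          have i1 : ‖b (u - (vh : X₂hat)) (q : Q)‖ ≤ ‖b‖ * ‖u - (vh : X₂hat)‖ * ‖(q : Q)‖ :=
            b.le_opNorm₂ _ _
          have hq : ‖q‖ = ‖(q : Q)‖ := rfl
          rw [hq]
          have n1 : (0:ℝ) ≤ ‖(q : Q)‖ := norm_nonneg _
          have n2 : (0:ℝ) ≤ ‖a‖ := a.opNorm_nonneg
          have n3 : (0:ℝ) ≤ ‖b₁‖ := b₁.opNorm_nonneg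
          have n4 : (0:ℝ) ≤ ‖b‖ := b.opNorm_nonneg
          have n5 : (0:ℝ) ≤ ‖θ - (ξh : X₁)‖ := norm_nonneg _
          have n6 : (0:ℝ) ≤ ‖u - (vh : X₂hat)‖ := norm_nonneg _
          have n7 : (0:ℝ) ≤ ‖p - (qh : Q)‖ := norm_nonneg _
          have hkey : ‖b‖ * ‖u - (vh : X₂hat)‖ ≤ M * E := by
            rw [hM, hE]
            nlinarith [mul_nonneg n2 n5, mul_nonneg n2 n6, mul_nonneg n2 n7,
              mul_nonneg n3 n5, mul_nonneg n3 n6, mul_nonneg n3 n7,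
              mul_nonneg n4 n5, mul_nonneg n4 n7]
          nlinarith [mul_le_mul_of_nonneg_right hkey n1, i1]
        rw [Prod.norm_def, Prod.norm_def]
        exact max_le hb1 (max_le hb2 hb3)
      -- transfer the bound to the discrete error
      have hed_bound : ‖ed‖ ≤ (K:ℝ) * (M * E) := by
        calc ‖ed‖ ≤ (K:ℝ) * ‖S ed‖ := hbound ed
          _ ≤ (K:ℝ) * (M * E) := by
              exact mul_le_mul_of_nonneg_left hSed hK0
      have hcomp1 : ‖θh - (ξh : X₁)‖ ≤ ‖ed‖ := by
        have : ‖ed.1‖ ≤ ‖ed‖ := norm_fst_le ed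
        simpa [hed, θh'] using this
      have hcomp2 : ‖uh - (vh : X₂hat)‖ ≤ ‖ed‖ := by
        have h' : ‖ed.2.1‖ ≤ ‖ed‖ := le_trans (norm_fst_le ed.2) (norm_snd_le ed)
        simpa [hed, uh'] using h'
      have hcomp3 : ‖ph - (qh : Q)‖ ≤ ‖ed‖ := by
        have h' : ‖ed.2.2‖ ≤ ‖ed‖ := le_trans (norm_snd_le ed.2) (norm_snd_le ed)
        simpa [hed, ph'] using h'
      have t1 : ‖θ - θh‖ ≤ ‖θ - (ξh : X₁)‖ + ‖θh - (ξh : X₁)‖ := by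
        calc ‖θ - θh‖ = ‖(θ - (ξh : X₁)) + ((ξh : X₁) - θh)‖ := by
              rw [sub_add_sub_cancel]
          _ ≤ ‖θ - (ξh : X₁)‖ + ‖(ξh : X₁) - θh‖ := norm_add_le _ _
          _ = ‖θ - (ξh : X₁)‖ + ‖θh - (ξh : X₁)‖ := by rw [norm_sub_rev ((ξh : X₁)) θh]
      have t2 : ‖u - uh‖ ≤ ‖u - (vh : X₂hat)‖ + ‖uh - (vh : X₂hat)‖ := by
        calc ‖u - uh‖ = ‖(u - (vh : X₂hat)) + ((vh : X₂hat) - uh)‖ := by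
              rw [sub_add_sub_cancel]
          _ ≤ ‖u - (vh : X₂hat)‖ + ‖(vh : X₂hat) - uh‖ := norm_add_le _ _
          _ = ‖u - (vh : X₂hat)‖ + ‖uh - (vh : X₂hat)‖ := by rw [norm_sub_rev ((vh : X₂hat)) uh]
      have t3 : ‖p - ph‖ ≤ ‖p - (qh : Q)‖ + ‖ph - (qh : Q)‖ := by
        calc ‖p - ph‖ = ‖(p - (qh : Q)) + ((qh : Q) - ph)‖ := by
              rw [sub_add_sub_cancel]
          _ ≤ ‖p - (qh : Q)‖ + ‖(qh : Q) - ph‖ := norm_add_le _ _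
          _ = ‖p - (qh : Q)‖ + ‖ph - (qh : Q)‖ := by rw [norm_sub_rev ((qh : Q)) ph]
      linarith [hcomp1, hcomp2, hcomp3, hed_bound, t1, t2, t3, hE0]
    -- pass to the infimum
    have hKM : (0:ℝ) ≤ (K:ℝ) * M := mul_nonneg hK0 hM0
    have hCpos : (0:ℝ) < 3 * (1 + (K:ℝ) * M) := by linarith
    haveI : Nonempty (X1h × X2h × Qh) := ⟨(0, 0, 0)⟩
    have hlow : (‖θ - θh‖ + ‖u - uh‖ + ‖p - ph‖) / (3 * (1 + (K:ℝ) * M)) ≤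
        ⨅ w : X1h × X2h × Qh,
          (‖θ - (w.1 : X₁)‖ + ‖u - (w.2.1 : X₂hat)‖ + ‖p - (w.2.2 : Q)‖) := by
      refine le_ciInf (fun w => ?_)
      rw [div_le_iff₀ hCpos]
      have := key w
      linarith [this]
    calc ‖θ - θh‖ + ‖u - uh‖ + ‖p - ph‖
        = (‖θ - θh‖ + ‖u - uh‖ + ‖p - ph‖) / (3 * (1 + (K:ℝ) * M)) *
            (3 * (1 + (K:ℝ) * M)) := (div_mul_cancel₀ _ (ne_of_gt hCpos)).symm
      _ ≤ (⨅ w : X1h × X2h × Qh,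
            (‖θ - (w.1 : X₁)‖ + ‖u - (w.2.1 : X₂hat)‖ + ‖p - (w.2.2 : Q)‖)) *
            (3 * (1 + (K:ℝ) * M)) := mul_le_mul_of_nonneg_right hlow (le_of_lt hCpos)
      _ = 3 * (1 + (K:ℝ) * M) * ⨅ w : X1h × X2h × Qh,
            (‖θ - (w.1 : X₁)‖ + ‖u - (w.2.1 : X₂hat)‖ + ‖p - (w.2.2 : Q)‖) := mul_comm _ _
  · -- consistency term vanishes
    refine real_iSup_zero _ (fun vh => ?_)
    have h := hc2 (vh.1 : X₂hat) (hconf vh.1.2)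
    have : -(b₁ θ (vh.1 : X₂hat)) - b (vh.1 : X₂hat) p = 0 := by linarith
    rw [this, zero_div]
end

section
/- Let X₂ and Q be real normed vector spaces and b : X₂ × Q → ℝ a bounded bilinear form. Let Q_h ⊆ Q be a subspace, let V_h and W_h be subspaces of X₂, and let M : V_h → W_h be a linear map such that b(M v, q_h) = b(v, q_h) for all v ∈ V_h and all q_h ∈ Q_h, and such that there is a constant C₀ > 0 with ‖M v‖_{X₂} ≤ C₀ ‖v‖_{X₂} for all v ∈ V_h. Suppose there is a constant C* > 0 such that for every q_h ∈ Q_h, sup over v ∈ V_h \ {0} of b(v, q_h)/‖v‖_{X₂} ≥ C* ‖q_h‖_Q. Then for every q_h ∈ Q_h, sup over w ∈ W_h \ {0} of b(w, q_h)/‖w‖_{X₂} ≥ (C*/C₀) ‖q_h‖_Q. -/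
/-- **Inf-sup transfer to the multiscale velocity space.**
If `M : Vh → Wh` is a linear map preserving the bilinear form `b` against all
discrete pressures in `Qh` and bounded with constant `C₀`, then an inf-sup
condition with constant `C*` for `(Vh, Qh)` transfers to an inf-sup condition
with constant `C*/C₀` for `(Wh, Qh)`. -/
theorem infsup_transfer
    {X₂ Q : Type*}
    [NormedAddCommGroup X₂] [NormedSpace ℝ X₂]
    [NormedAddCommGroup Q] [NormedSpace ℝ Q]
    (b : X₂ →L[ℝ] Q →L[ℝ] ℝ)
    (Qh : Submodule ℝ Q) (Vh Wh : Submodule ℝ X₂)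
    (M : Vh →ₗ[ℝ] Wh)
    (hMb : ∀ (v : Vh) (qh : Qh), b ((M v : Wh) : X₂) (qh : Q) = b (v : X₂) (qh : Q))
    (C₀ : ℝ) (hC₀ : 0 < C₀)
    (hMbound : ∀ v : Vh, ‖((M v : Wh) : X₂)‖ ≤ C₀ * ‖(v : X₂)‖)
    (Cstar : ℝ) (hCstar : 0 < Cstar)
    (hinfsup : ∀ qh : Qh,
      Cstar * ‖(qh : Q)‖ ≤
        ⨆ v : {v : Vh // v ≠ 0}, b (v.1 : X₂) (qh : Q) / ‖(v.1 : X₂)‖) :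
    ∀ qh : Qh,
      (Cstar / C₀) * ‖(qh : Q)‖ ≤
        ⨆ w : {w : Wh // w ≠ 0}, b (w.1 : X₂) (qh : Q) / ‖(w.1 : X₂)‖ := by
  intro qh
  set q : Q := (qh : Q) with hq
  set S : {w : Wh // w ≠ 0} → ℝ := fun w => b (w.1 : X₂) q / ‖(w.1 : X₂)‖ with hS
  have hbdd : BddAbove (Set.range S) := by
    refine ⟨‖b‖ * ‖q‖, ?_⟩
    rintro _ ⟨w, rfl⟩
    have hw0 : (w.1 : X₂) ≠ 0 := by
      simpa using w.2
    have hwpos : 0 < ‖(w.1 : X₂)‖ := norm_pos_iff.mpr hw0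
    rw [hS]
    rw [div_le_iff₀ hwpos]
    have h1 : b (w.1 : X₂) q ≤ ‖b (w.1 : X₂) q‖ := le_abs_self _
    have h2 : ‖b (w.1 : X₂) q‖ ≤ ‖b‖ * ‖(w.1 : X₂)‖ * ‖q‖ := b.le_opNorm₂ _ _
    have hb0 : 0 ≤ ‖b‖ := b.opNorm_nonneg
    nlinarith
  have hsup0 : 0 ≤ ⨆ w, S w := by
    by_cases hne : Nonempty {w : Wh // w ≠ 0}
    · obtain ⟨w₀⟩ := hne
      have hw₁ : (-w₀.1 : Wh) ≠ 0 := neg_ne_zero.mpr w₀.2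
      have h1 : S w₀ ≤ ⨆ w, S w := le_ciSup hbdd w₀
      have h2 : S ⟨-w₀.1, hw₁⟩ ≤ ⨆ w, S w := le_ciSup hbdd _
      have h3 : S ⟨-w₀.1, hw₁⟩ = - S w₀ := by
        simp [hS, neg_div]
      linarith
    · haveI := not_nonempty_iff.mp hne
      rw [iSup, Set.range_eq_empty, Real.sSup_empty]
  have key : ∀ v : Vh, v ≠ 0 → b (v : X₂) q / ‖(v : X₂)‖ ≤ C₀ * ⨆ w, S w := by
    intro v hv
    have hv0 : (v : X₂) ≠ 0 := by simpa using hv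
    have hvpos : 0 < ‖(v : X₂)‖ := norm_pos_iff.mpr hv0
    have heq : b ((M v : Wh) : X₂) q = b (v : X₂) q := hMb v qh
    by_cases hMv : M v = 0
    · have hz : b (v : X₂) q = 0 := by
        rw [← heq, hMv]; simp
      rw [hz, zero_div]
      exact mul_nonneg hC₀.le hsup0
    · have hMv0 : ((M v : Wh) : X₂) ≠ 0 := by simpa using hMv
      have hMpos : 0 < ‖((M v : Wh) : X₂)‖ := norm_pos_iff.mpr hMv0
      by_cases hbs : 0 ≤ b ((M v : Wh) : X₂) q
      · have h1 : S ⟨M v, hMv⟩ ≤ ⨆ w, S w := le_ciSup hbdd _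
        have h1' : b ((M v : Wh) : X₂) q / ‖((M v : Wh) : X₂)‖ ≤ ⨆ w, S w := h1
        rw [← heq]
        have hb := hMbound v
        rw [div_le_iff₀ hvpos]
        have h2 : b ((M v : Wh) : X₂) q / ‖((M v : Wh) : X₂)‖ * ‖((M v : Wh) : X₂)‖
            = b ((M v : Wh) : X₂) q := div_mul_cancel₀ _ hMpos.ne'
        have h3 : b ((M v : Wh) : X₂) q ≤ (⨆ w, S w) * ‖((M v : Wh) : X₂)‖ := by
          rw [← h2]; exact mul_le_mul_of_nonneg_right h1' hMpos.le
        nlinarith [hsup0, hb, h3, hvpos]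
      · push_neg at hbs
        have : b (v : X₂) q / ‖(v : X₂)‖ ≤ 0 :=
          div_nonpos_iff.mpr (Or.inr ⟨by rw [← heq]; linarith, hvpos.le⟩)
        exact this.trans (mul_nonneg hC₀.le hsup0)
  have main : Cstar * ‖q‖ ≤ C₀ * ⨆ w, S w := by
    by_cases hne : Nonempty {v : Vh // v ≠ 0}
    · have h1 := hinfsup qh
      have h2 : (⨆ v : {v : Vh // v ≠ 0}, b (v.1 : X₂) q / ‖(v.1 : X₂)‖)
          ≤ C₀ * ⨆ w, S w := ciSup_le fun v => key v.1 v.2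
      exact h1.trans h2
    · haveI := not_nonempty_iff.mp hne
      have h1 := hinfsup qh
      rw [iSup, Set.range_eq_empty, Real.sSup_empty] at h1
      have : 0 ≤ C₀ * ⨆ w, S w := mul_nonneg hC₀.le hsup0
      linarith
  rw [div_mul_eq_mul_div, div_le_iff₀ hC₀]
  have : (⨆ w, S w) * C₀ = C₀ * ⨆ w, S w := mul_comm _ _
  linarith [main, this]
end

section
/- Let X₁, X̃₂, Q, Π be finite-dimensional real vector spaces, let a : X₁ × X₁ → ℝ, b₁ : X₁ × X̃₂ → ℝ, b : X̃₂ × Q → ℝ, c : X̃₂ × Π → ℝ be bilinear forms, and let F : Q → ℝ be a linear functional. Assume c is nondegenerate in its second variable, i.e., if π ∈ Π satisfies c(τ, π) = 0 for all τ ∈ X̃₂, then π = 0. Define X₂ := {v ∈ X̃₂ : c(v, π) = 0 for all π ∈ Π}. Suppose the non-hybrid problem has a unique solution, i.e., there is exactly one triple (θ, u, p) ∈ X₁ × X₂ × Q with a(θ, ξ) + b₁(ξ, u) = 0 for all ξ ∈ X₁, b₁(θ, v) + b(v, p) = 0 for all v ∈ X₂, and b(u, q) = F(q) for all q ∈ Q.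 Then the hybrid problem has a unique solution: there is exactly one quadruple (θ̄, ū, p̄, λ) ∈ X₁ × X̃₂ × Q × Π with a(θ̄, ξ) + b₁(ξ, ū) = 0 for all ξ ∈ X₁, b₁(θ̄, τ) + b(τ, p̄) = c(τ, λ) for all τ ∈ X̃₂, b(ū, q) = F(q) for all q ∈ Q, and c(ū, π) = 0 for all π ∈ Π. Moreover, (θ̄, ū, p̄) = (θ, u, p). -/
/-- Any functional vanishing on the kernel of a pairing is represented by the pairing. -/
lemma exists_pairing_rep {X P : Type*}
    [AddCommGroup X] [Module ℝ X] [FiniteDimensional ℝ X]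
    [AddCommGroup P] [Module ℝ P] [FiniteDimensional ℝ P]
    (c : X →ₗ[ℝ] P →ₗ[ℝ] ℝ) (ℓ : X →ₗ[ℝ] ℝ)
    (h : ∀ v : X, (∀ π : P, c v π = 0) → ℓ v = 0) :
    ∃ lam : P, ∀ τ : X, ℓ τ = c τ lam := by
  have hmem : ℓ ∈ (LinearMap.ker c).dualAnnihilator := by
    rw [Submodule.mem_dualAnnihilator]
    intro w hw
    exact h w (fun π => by rw [LinearMap.mem_ker.mp hw]; rfl)
  rw [← LinearMap.range_dualMap_eq_dualAnnihilator_ker] at hmem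
  obtain ⟨Φ, hΦ⟩ := hmem
  obtain ⟨lam, hlam⟩ := (Module.evalEquiv ℝ P).surjective Φ
  refine ⟨lam, fun τ => ?_⟩
  have := congrArg (fun f => f τ) hΦ
  simp only [LinearMap.dualMap_apply] at this
  rw [← this, ← hlam]
  rfl


/-- **Equivalence between the expanded mixed method and its hybridization.**
Let `X₁, X₂t, Q, P` be finite-dimensional real vector spaces, `a, b₁, b, c`
bilinear forms and `F` a linear functional on `Q`.  Assume `c` is
nondegenerate in its second variable and define
`X₂ := {v ∈ X₂t : c v π = 0 for all π}`.  If the non-hybrid problem has a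
unique solution `(θ, u, p)` with `u ∈ X₂`, then the hybrid problem has a
unique solution `(θ̄, ū, p̄, λ)` and moreover `(θ̄, ū, p̄) = (θ, u, p)`. -/
theorem hybridization_equivalence
    {X₁ X₂t Q P : Type*}
    [AddCommGroup X₁] [Module ℝ X₁] [FiniteDimensional ℝ X₁]
    [AddCommGroup X₂t] [Module ℝ X₂t] [FiniteDimensional ℝ X₂t]
    [AddCommGroup Q] [Module ℝ Q] [FiniteDimensional ℝ Q]
    [AddCommGroup P] [Module ℝ P] [FiniteDimensional ℝ P]
    (a : X₁ →ₗ[ℝ] X₁ →ₗ[ℝ] ℝ)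
    (b₁ : X₁ →ₗ[ℝ] X₂t →ₗ[ℝ] ℝ)
    (b : X₂t →ₗ[ℝ] Q →ₗ[ℝ] ℝ)
    (c : X₂t →ₗ[ℝ] P →ₗ[ℝ] ℝ)
    (F : Q →ₗ[ℝ] ℝ)
    (hnondeg : ∀ π : P, (∀ τ : X₂t, c τ π = 0) → π = 0)
    -- the non-hybrid problem has a unique solution (with velocity in
    -- X₂ := {v : X₂t | ∀ π, c v π = 0})
    (hnonhybrid : ∃! s : X₁ × X₂t × Q,
      (∀ π : P, c s.2.1 π = 0) ∧
      (∀ ξ : X₁, a s.1 ξ + b₁ ξ s.2.1 = 0) ∧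
      (∀ v : X₂t, (∀ π : P, c v π = 0) → b₁ s.1 v + b v s.2.2 = 0) ∧
      (∀ q : Q, b s.2.1 q = F q)) :
    -- the hybrid problem has a unique solution
    (∃! t : X₁ × X₂t × Q × P,
      (∀ ξ : X₁, a t.1 ξ + b₁ ξ t.2.1 = 0) ∧
      (∀ τ : X₂t, b₁ t.1 τ + b τ t.2.2.1 = c τ t.2.2.2) ∧
      (∀ q : Q, b t.2.1 q = F q) ∧
      (∀ π : P, c t.2.1 π = 0)) ∧
    -- and its first three components coincide with the non-hybrid solution
    (∀ (θ θbar : X₁) (u ubar : X₂t) (p pbar : Q) (lam : P),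
      ((∀ π : P, c u π = 0) ∧
       (∀ ξ : X₁, a θ ξ + b₁ ξ u = 0) ∧
       (∀ v : X₂t, (∀ π : P, c v π = 0) → b₁ θ v + b v p = 0) ∧
       (∀ q : Q, b u q = F q)) →
      ((∀ ξ : X₁, a θbar ξ + b₁ ξ ubar = 0) ∧
       (∀ τ : X₂t, b₁ θbar τ + b τ pbar = c τ lam) ∧
       (∀ q : Q, b ubar q = F q) ∧
       (∀ π : P, c ubar π = 0)) →
      θbar = θ ∧ ubar = u ∧ pbar = p) := by
  obtain ⟨⟨θ, u, p⟩, ⟨hX₂, h1, h2, h3⟩, huniq⟩ := hnonhybrid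
  -- representation of the residual functional by the pairing
  obtain ⟨lam, hlam⟩ := exists_pairing_rep c (b₁ θ + b.flip p)
    (fun v hv => by simpa using h2 v hv)
  simp only [LinearMap.add_apply, LinearMap.flip_apply] at hlam
  -- every hybrid solution has non-hybrid part equal to (θ, u, p)
  have key : ∀ t : X₁ × X₂t × Q × P,
      ((∀ ξ : X₁, a t.1 ξ + b₁ ξ t.2.1 = 0) ∧
       (∀ τ : X₂t, b₁ t.1 τ + b τ t.2.2.1 = c τ t.2.2.2) ∧
       (∀ q : Q, b t.2.1 q = F q) ∧
       (∀ π : P, c t.2.1 π = 0)) → t = (θ, u, p, lam) := by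
    rintro ⟨θ', u', p', lam'⟩ ⟨g1, g2, g3, g4⟩
    have htrip : (θ', u', p') = (θ, u, p) := by
      refine huniq (θ', u', p') ⟨g4, g1, fun v hv => ?_, g3⟩
      rw [g2 v, hv lam']
    have hθ : θ' = θ := congrArg Prod.fst htrip
    have hu : u' = u := congrArg (fun x : X₁ × X₂t × Q => x.2.1) htrip
    have hp : p' = p := congrArg (fun x : X₁ × X₂t × Q => x.2.2) htrip
    subst hθ; subst hu; subst hp
    have hz : ∀ τ : X₂t, c τ (lam' - lam) = 0 := fun τ => by
      have := (g2 τ).symm.trans (hlam τ)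
      simp [map_sub, ← this]
    have : lam' = lam := sub_eq_zero.mp (hnondeg _ hz)
    rw [this]
  constructor
  · exact ⟨(θ, u, p, lam), ⟨h1, fun τ => hlam τ, h3, hX₂⟩, key⟩
  · rintro θ₀ θbar u₀ ubar p₀ pbar lam' hnh hh
    have e1 : ((θbar, ubar, pbar, lam') : X₁ × X₂t × Q × P) = (θ, u, p, lam) :=
      key _ hh
    have e2 : ((θ₀, u₀, p₀) : X₁ × X₂t × Q) = (θ, u, p) :=
      huniq _ ⟨hnh.1, hnh.2.1, hnh.2.2.1, hnh.2.2.2⟩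
    simp only [Prod.mk.injEq] at e1 e2
    exact ⟨e1.1.trans e2.1.symm, e1.2.1.trans e2.2.1.symm,
      e1.2.2.1.trans e2.2.2.symm⟩
end
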